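/- arXiv:1601.01915 — 3 statements merged into one kernel-verified Lean document; each statement's English description precedes it below -/
import Mathlib

section
/- Let k > 0, let x ∈ ℝ² with x ≠ 0, and let ξ ∈ ℝ² with |ξ| = 1. For each N ∈ ℕ set θ_n^{(N)} = (cos(2πn/N), sin(2πn/N)) for n = 1, …, N. Then the Riemann sums converge: lim_{N→∞} (1/N) Σ_{n=1}^{N} (θ_n^{(N)} · ξ) · exp(i k θ_n^{(N)} · x) = i · ((x · ξ)/|x|) · J₁(k|x|). (This is the discrete-to-continuum statement of Lemma 1: for sufficiently many equally distributed directions on S¹, the normalized sum approaches the circle average, which equals i (x̂·ξ) J₁(k|x|).) -/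
open MeasureTheory Real Filter

/-- The Bessel function of order 1 of the first kind, via its Bessel integral
representation `J₁(s) = (1/π) ∫₀^π cos(τ − s sin τ) dτ`. -/
noncomputable def J1 (s : ℝ) : ℝ :=
  (1 / π) * ∫ τ in (0:ℝ)..π, Real.cos (τ - s * Real.sin τ)


lemma riemann_sum_tendsto (f : ℝ → ℂ) (hf : Continuous f) :
    Tendsto (fun N : ℕ => (1 / (N : ℂ)) * ∑ n ∈ Finset.Icc 1 N, f (2 * π * n / N)) atTop
      (nhds ((1 / (2 * π) : ℂ) * ∫ t in (0:ℝ)..(2 * π), f t)) := by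
  have hπ : (0:ℝ) < π := Real.pi_pos
  rw [Metric.tendsto_atTop]
  intro ε hε
  obtain ⟨δ, hδ, hmod⟩ := Metric.uniformContinuousOn_iff.mp
    ((isCompact_Icc (a := (0:ℝ)) (b := 2*π)).uniformContinuousOn_of_continuous hf.continuousOn)
    (ε/2) (by positivity)
  refine ⟨⌈2*π/δ⌉₊ + 1, fun N hN => ?_⟩
  have hN1 : 1 ≤ N := le_trans (Nat.le_add_left 1 _) hN
  have hNR : (0:ℝ) < N := by exact_mod_cast hN1
  have hNC : (N:ℂ) ≠ 0 := by exact_mod_cast hNR.ne'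
  have hstep : 2*π/N < δ := by
    have h2 : 2*π/δ < (N:ℝ) := by
      calc 2*π/δ ≤ (⌈2*π/δ⌉₊ : ℝ) := Nat.le_ceil _
        _ < (⌈2*π/δ⌉₊ + 1 : ℕ) := by push_cast; linarith
        _ ≤ N := by exact_mod_cast hN
    rw [div_lt_iff₀ hδ] at h2
    rw [div_lt_iff₀ hNR]
    linarith
  set t : ℕ → ℝ := fun n => 2 * π * n / N with ht
  have htmono : ∀ i : ℕ, t i < t (i+1) := by
    intro i
    simp only [ht]
    rw [div_lt_div_iff_of_pos_right hNR]
    push_cast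
    nlinarith
  have htdiff : ∀ i : ℕ, t (i+1) - t i = 2*π/N := by
    intro i; simp only [ht]; push_cast; field_simp; ring
  have ht0 : t 0 = 0 := by simp [ht]
  have htN : t N = 2*π := by simp only [ht]; field_simp
  have htmem : ∀ i ≤ N, t i ∈ Set.Icc 0 (2*π) := by
    intro i hi
    constructor
    · simp only [ht]; positivity
    · simp only [ht]
      rw [div_le_iff₀ hNR]
      have : (i:ℝ) ≤ N := by exact_mod_cast hi
      nlinarith
  -- the per-interval error decomposition
  have hsum : ∑ n ∈ Finset.Icc 1 N, f (2 * π * n / N) = ∑ i ∈ Finset.range N, f (t (i+1)) := by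
    rw [← Finset.Ico_add_one_right_eq_Icc, Finset.sum_Ico_eq_sum_range]
    refine Finset.sum_congr (by norm_num) (fun i _ => ?_)
    congr 1
    simp only [ht]; push_cast; ring
  set S : ℂ := ∑ i ∈ Finset.range N, ∫ u in t i..t (i+1), (f (t (i+1)) - f u) with hS
  have hpiece : ∀ i ∈ Finset.range N,
      (∫ u in t i..t (i+1), (f (t (i+1)) - f u)) =
        ((2*π/N : ℝ) : ℂ) * f (t (i+1)) - ∫ u in t i..t (i+1), f u := by
    intro i _
    rw [intervalIntegral.integral_sub intervalIntegrable_const (hf.intervalIntegrable _ _),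
      intervalIntegral.integral_const, htdiff i, Complex.real_smul]
  have hSeq : S = ((2*π/N : ℝ):ℂ) * ∑ i ∈ Finset.range N, f (t (i+1)) - ∫ u in (0:ℝ)..(2*π), f u := by
    rw [hS, Finset.sum_congr rfl hpiece, Finset.sum_sub_distrib, ← Finset.mul_sum,
      intervalIntegral.sum_integral_adjacent_intervals (fun i _ => hf.intervalIntegrable _ _),
      ht0, htN]
  have hdiff : (1 / (N : ℂ)) * ∑ n ∈ Finset.Icc 1 N, f (2 * π * n / N)
      - (1 / (2 * π) : ℂ) * ∫ t in (0:ℝ)..(2 * π), f t = (1 / (2*π) : ℂ) * S := by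
    rw [hsum, hSeq]
    have hπC : ((π:ℝ):ℂ) ≠ 0 := by exact_mod_cast hπ.ne'
    push_cast
    field_simp
  have hSbound : ‖S‖ ≤ ε/2 * (2*π) := by
    have hone : ∀ i ∈ Finset.range N, ‖∫ u in t i..t (i+1), (f (t (i+1)) - f u)‖ ≤ ε/2 * (2*π/N) := by
      intro i hi
      have hiN : i + 1 ≤ N := Finset.mem_range.mp hi
      have h1 := htmem (i+1) hiN
      have h0 := htmem i (le_trans (Nat.le_succ i) hiN)
      have := intervalIntegral.norm_integral_le_of_norm_le_const
        (C := ε/2) (f := fun u => f (t (i+1)) - f u) (a := t i) (b := t (i+1)) ?_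
      · calc ‖∫ u in t i..t (i+1), (f (t (i+1)) - f u)‖ ≤ ε/2 * |t (i+1) - t i| := this
          _ = ε/2 * (2*π/N) := by rw [htdiff i, abs_of_pos (by positivity)]
      · intro u hu
        rw [Set.uIoc_of_le (htmono i).le] at hu
        have hu1 : t i < u := hu.1
        have hu2 : u ≤ t (i+1) := hu.2
        have humem : u ∈ Set.Icc 0 (2*π) := ⟨le_trans h0.1 hu1.le, le_trans hu2 h1.2⟩
        have : dist (t (i+1)) u < δ := by
          rw [Real.dist_eq, abs_of_nonneg (by linarith)]
          have := htdiff i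
          linarith
        exact le_of_lt (by rw [← dist_eq_norm]; exact hmod _ h1 _ humem this)
    calc ‖S‖ ≤ ∑ i ∈ Finset.range N, ‖∫ u in t i..t (i+1), (f (t (i+1)) - f u)‖ :=
          norm_sum_le _ _
      _ ≤ ∑ i ∈ Finset.range N, (ε/2 * (2*π/N)) := Finset.sum_le_sum hone
      _ = ε/2 * (2*π) := by
          rw [Finset.sum_const, Finset.card_range, nsmul_eq_mul]
          field_simp
  rw [dist_eq_norm, hdiff, norm_mul]
  have h1 : ‖(1 / (2*π) : ℂ)‖ = 1/(2*π) := by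
    rw [show ((1:ℂ) / (2*π)) = (((1/(2*π):ℝ)):ℂ) by push_cast; ring, Complex.norm_real,
      Real.norm_eq_abs, abs_of_pos (by positivity)]
  rw [h1]
  calc 1/(2*π) * ‖S‖ ≤ 1/(2*π) * (ε/2 * (2*π)) := by
        apply mul_le_mul_of_nonneg_left hSbound (by positivity)
    _ = ε/2 := by field_simp
    _ < ε := by linarith

-- I2 = 0
lemma I2_zero (s : ℝ) (hs : s ≠ 0) :
    (∫ u in (0:ℝ)..(2*π), ((Real.sin u : ℝ):ℂ) * Complex.exp (Complex.I * ((s * Real.cos u : ℝ):ℂ))) = 0 := by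
  set H : ℝ → ℂ := fun u => -(Complex.I * s)⁻¹ * Complex.exp (Complex.I * ((s * Real.cos u : ℝ):ℂ)) with hH
  have hderiv : ∀ u ∈ Set.uIcc (0:ℝ) (2*π), HasDerivAt H
      (((Real.sin u : ℝ):ℂ) * Complex.exp (Complex.I * ((s * Real.cos u : ℝ):ℂ))) u := by
    intro u _
    have h1 : HasDerivAt (fun u : ℝ => s * Real.cos u) (-(s * Real.sin u)) u := by
      simpa [mul_comm, mul_neg] using (Real.hasDerivAt_cos u).const_mul s
    have h2 : HasDerivAt (fun u : ℝ => ((s * Real.cos u : ℝ):ℂ)) ((-(s * Real.sin u) : ℝ):ℂ) u :=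
      h1.ofReal_comp
    have h3 : HasDerivAt (fun u : ℝ => Complex.I * ((s * Real.cos u : ℝ):ℂ))
        (Complex.I * ((-(s * Real.sin u) : ℝ):ℂ)) u := h2.const_mul Complex.I
    have h4 := h3.cexp
    have h5 := h4.const_mul (-(Complex.I * (s:ℂ))⁻¹)
    refine h5.congr_deriv ?_
    have hIs : Complex.I * (s:ℂ) ≠ 0 := by
      simp [Complex.I_ne_zero, Complex.ofReal_ne_zero, hs]
    simp only [Complex.ofReal_neg, Complex.ofReal_mul]
    linear_combination (Complex.exp (Complex.I * ((s:ℂ) * (Real.cos u : ℂ))) * (Real.sin u : ℂ)) * inv_mul_cancel₀ hIs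
  have := intervalIntegral.integral_eq_sub_of_hasDerivAt hderiv ((Continuous.intervalIntegrable (by fun_prop)) _ _)
  rw [this, hH]
  simp

-- A = 0
lemma A_zero (s : ℝ) :
    (∫ u in (0:ℝ)..(2*π), Real.cos u * Real.cos (s * Real.cos u)) = 0 := by
  set p : ℝ → ℝ := fun u => Real.cos u * Real.cos (s * Real.cos u) with hp
  have hper : Function.Periodic p (2*π) := fun u => by simp [hp, Real.cos_add_two_pi]
  have h1 : (∫ u in (-π)..π, p u) = ∫ u in (0:ℝ)..(2*π), p u := by
    have := hper.intervalIntegral_add_eq (-π) 0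
    rw [show -π + 2*π = π by ring, zero_add] at this
    exact this
  have h2 : (∫ v in (-π)..π, p (π - v)) = ∫ u in (0:ℝ)..(2*π), p u := by
    rw [intervalIntegral.integral_comp_sub_left p π]
    norm_num
    rw [show π + π = 2*π by ring]
  have h3 : ∀ v, p (π - v) = -p v := by
    intro v
    simp [hp, Real.cos_pi_sub, mul_neg, Real.cos_neg]
  rw [show (fun v => p (π - v)) = fun v => -p v from funext h3,
    intervalIntegral.integral_neg] at h2
  linarith

-- B = 2π J1 s
lemma B_eq (s : ℝ) :
    (∫ u in (0:ℝ)..(2*π), Real.cos u * Real.sin (s * Real.cos u)) = 2 * π * J1 s := by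
  set q : ℝ → ℝ := fun u => Real.cos u * Real.sin (s * Real.cos u) with hq
  set d : ℝ → ℝ := fun τ => Real.sin τ * Real.sin (s * Real.sin τ) with hd
  have hqc : Continuous q := by fun_prop
  have hdc : Continuous d := by fun_prop
  -- (iii) ∫_{π/2}^{π} d = ∫_0^{π/2} d
  have h3 : (∫ τ in (0:ℝ)..(π/2), d τ) = ∫ τ in (π/2)..π, d τ := by
    have h := intervalIntegral.integral_comp_sub_left (a := (0:ℝ)) (b := π/2) d π
    rw [show π - π/2 = π/2 by ring, sub_zero] at h
    rw [← h]
    refine intervalIntegral.integral_congr fun τ _ => ?_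
    simp [hd, Real.sin_pi_sub]
  have hD : (∫ τ in (0:ℝ)..π, d τ) = 2 * ∫ τ in (0:ℝ)..(π/2), d τ := by
    rw [← intervalIntegral.integral_add_adjacent_intervals (a := (0:ℝ)) (b := π/2) (c := π)
      (hdc.intervalIntegrable _ _) (hdc.intervalIntegrable _ _), ← h3]
    ring
  -- (i) C = 0
  have hC : (∫ τ in (0:ℝ)..π, Real.cos τ * Real.cos (s * Real.sin τ)) = 0 := by
    set c : ℝ → ℝ := fun τ => Real.cos τ * Real.cos (s * Real.sin τ) with hc
    have h2 := intervalIntegral.integral_comp_sub_left (a := (0:ℝ)) (b := π) c π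
    rw [sub_self, sub_zero] at h2
    have h3 : ∀ v, c (π - v) = -c v := fun v => by
      simp [hc, Real.cos_pi_sub, Real.sin_pi_sub]
    rw [show (fun v => c (π - v)) = fun v => -c v from funext h3,
      intervalIntegral.integral_neg] at h2
    linarith
  -- (ii) π J1 = C + D
  have hJ : π * J1 s = ∫ τ in (0:ℝ)..π, d τ := by
    rw [J1]
    have hπ : (π:ℝ) ≠ 0 := Real.pi_ne_zero
    rw [show (π : ℝ) * ((1/π) * ∫ τ in (0:ℝ)..π, Real.cos (τ - s * Real.sin τ))
        = ∫ τ in (0:ℝ)..π, Real.cos (τ - s * Real.sin τ) by field_simp]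
    have hsplit : (∫ τ in (0:ℝ)..π, Real.cos (τ - s * Real.sin τ))
        = (∫ τ in (0:ℝ)..π, Real.cos τ * Real.cos (s * Real.sin τ)) + ∫ τ in (0:ℝ)..π, d τ := by
      rw [← intervalIntegral.integral_add
        ((Continuous.intervalIntegrable (by fun_prop) _ _))
        ((Continuous.intervalIntegrable (by fun_prop) _ _))]
      exact intervalIntegral.integral_congr fun τ _ => Real.cos_sub τ (s * Real.sin τ)
    rw [hsplit, hC, zero_add]
  -- (iv) ∫_0^π q = 2 ∫_0^{π/2} d
  have h4 : (∫ u in (0:ℝ)..π, q u) = 2 * ∫ τ in (0:ℝ)..(π/2), d τ := by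
    have hsub := intervalIntegral.integral_comp_sub_left (a := -(π/2)) (b := π/2) q (π/2)
    rw [show π/2 - π/2 = 0 by ring, show π/2 - -(π/2) = π by ring] at hsub
    have hqd : ∀ v, q (π/2 - v) = d v := fun v => by
      simp [hq, hd, Real.cos_pi_div_two_sub, Real.sin_pi_div_two_sub]
    rw [show (fun v => q (π/2 - v)) = d from funext hqd] at hsub
    have hneg : (∫ v in (-(π/2))..(0:ℝ), d v) = ∫ v in (0:ℝ)..(π/2), d v := by
      have h := intervalIntegral.integral_comp_neg (a := (0:ℝ)) (b := π/2) d
      rw [neg_zero] at h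
      rw [← h]
      refine intervalIntegral.integral_congr fun v _ => ?_
      simp [hd, Real.sin_neg]
    rw [← hsub, ← intervalIntegral.integral_add_adjacent_intervals (a := -(π/2)) (b := (0:ℝ)) (c := π/2)
      (hdc.intervalIntegrable _ _) (hdc.intervalIntegrable _ _), hneg]
    ring
  -- (v) ∫_π^{2π} q = ∫_0^π q
  have h5 : (∫ u in (0:ℝ)..π, q u) = ∫ u in (π:ℝ)..(2*π), q u := by
    have h := intervalIntegral.integral_comp_sub_left (a := (0:ℝ)) (b := π) q (2*π)
    rw [show 2*π - π = π by ring, sub_zero] at h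
    rw [← h]
    refine intervalIntegral.integral_congr fun u _ => ?_
    simp [hq, Real.cos_sub, Real.cos_two_pi, Real.sin_two_pi]
  rw [← intervalIntegral.integral_add_adjacent_intervals (a := (0:ℝ)) (b := π) (c := 2*π)
    (hqc.intervalIntegrable _ _) (hqc.intervalIntegrable _ _), ← h5, h4]
  linarith [hD, hJ]


lemma I1_eq (s : ℝ) :
    (∫ u in (0:ℝ)..(2*π), ((Real.cos u : ℝ):ℂ) * Complex.exp (Complex.I * ((s * Real.cos u : ℝ):ℂ)))
      = ((2 * π * J1 s : ℝ):ℂ) * Complex.I := by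
  have hpt : ∀ u : ℝ, ((Real.cos u : ℝ):ℂ) * Complex.exp (Complex.I * ((s * Real.cos u : ℝ):ℂ))
      = ((Real.cos u * Real.cos (s * Real.cos u) : ℝ):ℂ)
        + ((Real.cos u * Real.sin (s * Real.cos u) : ℝ):ℂ) * Complex.I := by
    intro u
    rw [mul_comm Complex.I, Complex.exp_mul_I]
    push_cast [Complex.ofReal_cos, Complex.ofReal_sin]
    ring
  rw [intervalIntegral.integral_congr (g := fun u => ((Real.cos u * Real.cos (s * Real.cos u) : ℝ):ℂ)
      + ((Real.cos u * Real.sin (s * Real.cos u) : ℝ):ℂ) * Complex.I) (fun u _ => hpt u),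
    intervalIntegral.integral_add (Continuous.intervalIntegrable (by fun_prop) _ _)
      (Continuous.intervalIntegrable (by fun_prop) _ _),
    intervalIntegral.integral_mul_const, intervalIntegral.integral_ofReal,
    intervalIntegral.integral_ofReal, A_zero s, B_eq s]
  simp

lemma circle_int (k : ℝ) (hk : 0 < k) (x ξ : EuclideanSpace ℝ (Fin 2)) (hx : x ≠ 0) :
    (1 / (2 * π) : ℂ) * (∫ t in (0:ℝ)..(2*π),
        ((ξ 0 * Real.cos t + ξ 1 * Real.sin t : ℝ) : ℂ) *
          Complex.exp (Complex.I * (k : ℂ) * ((x 0 * Real.cos t + x 1 * Real.sin t : ℝ) : ℂ)))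
      = Complex.I * (((inner ℝ x ξ : ℝ) / ‖x‖ : ℝ) : ℂ) * (J1 (k * ‖x‖) : ℂ) := by
  have hπ : (0:ℝ) < π := Real.pi_pos
  set r := ‖x‖ with hrdef
  have hr : 0 < r := norm_pos_iff.mpr hx
  have hr2 : r = Real.sqrt ((x 0)^2 + (x 1)^2) := by
    rw [hrdef, EuclideanSpace.norm_eq]
    simp [Fin.sum_univ_two, Real.norm_eq_abs, sq_abs]
  set z : ℂ := (x 0 : ℂ) + (x 1 : ℂ) * Complex.I with hzdef
  have hre : z.re = x 0 := by simp [hzdef]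
  have him : z.im = x 1 := by simp [hzdef]
  have habs : ‖z‖ = r := by
    rw [Complex.norm_def, Complex.normSq_apply, hre, him, hr2]
    ring_nf
  have hz : z ≠ 0 := by
    intro h
    rw [h, norm_zero] at habs
    linarith
  set φ := Complex.arg z with hφdef
  have hx0 : x 0 = r * Real.cos φ := by
    rw [hφdef, Complex.cos_arg hz, habs, hre]
    field_simp
  have hx1 : x 1 = r * Real.sin φ := by
    rw [hφdef, Complex.sin_arg, habs, him]
    field_simp
  set s := k * r with hsdef
  have hs : s ≠ 0 := by positivity
  set a := Real.cos φ * ξ 0 + Real.sin φ * ξ 1 with hadef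
  set bb := -Real.sin φ * ξ 0 + Real.cos φ * ξ 1 with hbbdef
  have hinner : (inner ℝ x ξ : ℝ) = x 0 * ξ 0 + x 1 * ξ 1 := by
    simp [PiLp.inner_apply, Fin.sum_univ_two, RCLike.inner_apply]
    ring
  have ha : (inner ℝ x ξ : ℝ) / r = a := by
    rw [hinner, hx0, hx1, hadef]
    field_simp
  have hid1 : ∀ t : ℝ, x 0 * Real.cos t + x 1 * Real.sin t = r * Real.cos (t - φ) := by
    intro t; rw [hx0, hx1, Real.cos_sub]; ring
  have hid2 : ∀ t : ℝ, ξ 0 * Real.cos t + ξ 1 * Real.sin t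
      = a * Real.cos (t - φ) + bb * Real.sin (t - φ) := by
    intro t
    rw [Real.cos_sub, Real.sin_sub, hadef, hbbdef]
    linear_combination (-(ξ 0 * Real.cos t + ξ 1 * Real.sin t)) * (Real.sin_sq_add_cos_sq φ)
  set G : ℝ → ℂ := fun u => ((a * Real.cos u + bb * Real.sin u : ℝ) : ℂ) *
      Complex.exp (Complex.I * ((s * Real.cos u : ℝ) : ℂ)) with hGdef
  have hFG : ∀ t : ℝ, ((ξ 0 * Real.cos t + ξ 1 * Real.sin t : ℝ) : ℂ) *
      Complex.exp (Complex.I * (k : ℂ) * ((x 0 * Real.cos t + x 1 * Real.sin t : ℝ) : ℂ))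
      = G (t - φ) := by
    intro t
    rw [hGdef]
    simp only
    rw [hid2 t]
    congr 2
    rw [hid1 t]
    push_cast [hsdef]
    ring
  have hGper : Function.Periodic G (2*π) := by
    intro u
    simp only [hGdef, Real.cos_add_two_pi, Real.sin_add_two_pi]
  have hstep1 : (∫ t in (0:ℝ)..(2*π),
        ((ξ 0 * Real.cos t + ξ 1 * Real.sin t : ℝ) : ℂ) *
          Complex.exp (Complex.I * (k : ℂ) * ((x 0 * Real.cos t + x 1 * Real.sin t : ℝ) : ℂ)))
      = ∫ u in (0:ℝ)..(2*π), G u := by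
    rw [intervalIntegral.integral_congr (g := fun t => G (t - φ)) (fun t _ => hFG t),
      intervalIntegral.integral_comp_sub_right G φ]
    have h := hGper.intervalIntegral_add_eq (0 - φ) 0
    rw [show 0 - φ + 2*π = 2*π - φ by ring, zero_add] at h
    exact h
  have hsplit : (∫ u in (0:ℝ)..(2*π), G u)
      = (a:ℂ) * (∫ u in (0:ℝ)..(2*π), ((Real.cos u : ℝ):ℂ) * Complex.exp (Complex.I * ((s * Real.cos u : ℝ):ℂ)))
        + (bb:ℂ) * ∫ u in (0:ℝ)..(2*π), ((Real.sin u : ℝ):ℂ) * Complex.exp (Complex.I * ((s * Real.cos u : ℝ):ℂ)) := by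
    rw [← intervalIntegral.integral_const_mul, ← intervalIntegral.integral_const_mul,
      ← intervalIntegral.integral_add (Continuous.intervalIntegrable (by fun_prop) _ _)
        (Continuous.intervalIntegrable (by fun_prop) _ _)]
    refine intervalIntegral.integral_congr fun u _ => ?_
    rw [hGdef]
    push_cast
    ring
  rw [hstep1, hsplit, I1_eq s, I2_zero s hs, ← ha]
  have hπC : ((π:ℝ):ℂ) ≠ 0 := by exact_mod_cast hπ.ne'
  have hrC : ((r:ℝ):ℂ) ≠ 0 := by exact_mod_cast hr.ne'
  rw [hsdef]
  push_cast
  field_simp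
  ring

/-- Lemma 1 (discrete-to-continuum): with equidistributed directions
`θₙ^{(N)} = (cos(2πn/N), sin(2πn/N))`, `n = 1, …, N`, the Riemann sums
`(1/N) Σₙ (θₙ·ξ) e^{i k θₙ·x}` converge to `i (x̂·ξ) J₁(k|x|)` as `N → ∞`. -/
theorem stmt_3 (k : ℝ) (hk : 0 < k) (x ξ : EuclideanSpace ℝ (Fin 2))
    (hx : x ≠ 0) (hξ : ‖ξ‖ = 1) :
    Tendsto
      (fun N : ℕ =>
        (1 / (N : ℂ)) *
          ∑ n ∈ Finset.Icc 1 N,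
            ((ξ 0 * Real.cos (2 * π * n / N) + ξ 1 * Real.sin (2 * π * n / N) : ℝ) : ℂ) *
              Complex.exp (Complex.I * (k : ℂ) *
                ((x 0 * Real.cos (2 * π * n / N) + x 1 * Real.sin (2 * π * n / N) : ℝ) : ℂ)))
      atTop
      (nhds (Complex.I * (((inner ℝ x ξ : ℝ) / ‖x‖ : ℝ) : ℂ) * (J1 (k * ‖x‖) : ℂ))) := by
  have h := riemann_sum_tendsto
    (fun t => ((ξ 0 * Real.cos t + ξ 1 * Real.sin t : ℝ) : ℂ) *
      Complex.exp (Complex.I * (k : ℂ) * ((x 0 * Real.cos t + x 1 * Real.sin t : ℝ) : ℂ)))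
    (by fun_prop)
  rw [circle_int k hk x ξ hx] at h
  exact h
end

section
/- Let N, M ∈ ℕ, k > 0, θ₁, …, θ_N ∈ ℝ² unit vectors, y₁, …, y_M ∈ ℝ², n₁, …, n_M ∈ ℝ² unit vectors, z ∈ ℝ² with z ≠ y_m for all m, and set β_m := (((z − y_m) · n_m)/|z − y_m|) · J₁(k|z − y_m|). For each n define Ψ₂(n) := 2 Σ_{m=1}^{M} (θ_n · n_m) β_m exp(i k θ_n · y_m). If for all m, m' ∈ {1, …, M}: (1/N) Σ_{n=1}^{N} (θ_n · n_m)(θ_n · n_{m'}) exp(i k θ_n · (y_m − y_{m'})) = 1/2 if m = m' and = 0 if m ≠ m', then (1/N) Σ_{n=1}^{N} Ψ₂(n) · conj(Ψ₂(n)) = 2 Σ_{m=1}^{M} β_m², i.e., equation (term4) of the paper: (1/N)Σ_n Ψ₂Ψ̄₂ = 2 Σ_m ((z − y_m)/|z − y_m| · n_m)² J₁(k|z − y_m|)². -/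
open MeasureTheory Real

/-- Equation (term4) of the paper: with
`Ψ₂(n) = 2 Σₘ (θₙ·nₘ) βₘ e^{i k θₙ·yₘ}` and assuming the discrete orthogonality relations
`(1/N) Σₙ (θₙ·nₘ)(θₙ·nₘ') e^{i k θₙ·(yₘ − yₘ')} = (1/2) δ_{m m'}`, one has
`(1/N) Σₙ Ψ₂(n) conj(Ψ₂(n)) = 2 Σₘ βₘ²`. -/
theorem stmt_7 (N M : ℕ) (k : ℝ) (hk : 0 < k)
    (θ : Fin N → EuclideanSpace ℝ (Fin 2)) (hθ : ∀ n, ‖θ n‖ = 1)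
    (y : Fin M → EuclideanSpace ℝ (Fin 2))
    (nv : Fin M → EuclideanSpace ℝ (Fin 2)) (hnv : ∀ m, ‖nv m‖ = 1)
    (z : EuclideanSpace ℝ (Fin 2)) (hz : ∀ m, z ≠ y m)
    (β : Fin M → ℝ)
    (hβ : ∀ m, β m = ((inner ℝ (z - y m) (nv m) : ℝ) / ‖z - y m‖) * J1 (k * ‖z - y m‖))
    (Ψ₂ : Fin N → ℂ)
    (hΨ₂ : ∀ n, Ψ₂ n =
      2 * ∑ m : Fin M,
          ((inner ℝ (θ n) (nv m) : ℝ) : ℂ) * (β m : ℂ) *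
            Complex.exp (Complex.I * (k : ℂ) * ((inner ℝ (θ n) (y m) : ℝ) : ℂ)))
    (H1 : ∀ m m' : Fin M,
      (1 / (N : ℂ)) *
          ∑ n : Fin N,
            ((inner ℝ (θ n) (nv m) : ℝ) : ℂ) * ((inner ℝ (θ n) (nv m') : ℝ) : ℂ) *
              Complex.exp (Complex.I * (k : ℂ) * ((inner ℝ (θ n) (y m - y m') : ℝ) : ℂ)) =
        if m = m' then 1 / 2 else 0) :
    (1 / (N : ℂ)) * ∑ n : Fin N, Ψ₂ n * (starRingEnd ℂ) (Ψ₂ n) =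
      ((2 * ∑ m : Fin M, (β m) ^ 2 : ℝ) : ℂ) := by
  have key : ∀ n, Ψ₂ n * (starRingEnd ℂ) (Ψ₂ n) =
      ∑ m : Fin M, ∑ m' : Fin M,
        4 * (β m : ℂ) * (β m' : ℂ) *
        (((inner ℝ (θ n) (nv m) : ℝ) : ℂ) * ((inner ℝ (θ n) (nv m') : ℝ) : ℂ) *
          Complex.exp (Complex.I * (k : ℂ) * ((inner ℝ (θ n) (y m - y m') : ℝ) : ℂ))) := by
    intro n
    rw [hΨ₂ n, map_mul, map_sum, mul_mul_mul_comm, Finset.sum_mul_sum]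
    rw [Finset.mul_sum]
    refine Finset.sum_congr rfl fun m _ => ?_
    rw [Finset.mul_sum]
    refine Finset.sum_congr rfl fun m' _ => ?_
    have : ((inner ℝ (θ n) (y m - y m') : ℝ) : ℂ) =
        ((inner ℝ (θ n) (y m) : ℝ) : ℂ) - ((inner ℝ (θ n) (y m') : ℝ) : ℂ) := by
      rw [inner_sub_right]; push_cast; ring
    simp only [map_mul, Complex.conj_ofReal, ← Complex.exp_conj, map_mul, Complex.conj_I,
      map_ofNat, this]
    rw [show Complex.I * (k:ℂ) * (((inner ℝ (θ n) (y m) : ℝ):ℂ) - ((inner ℝ (θ n) (y m') : ℝ):ℂ)) =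
      Complex.I * (k:ℂ) * ((inner ℝ (θ n) (y m) : ℝ):ℂ) +
      -Complex.I * (k:ℂ) * ((inner ℝ (θ n) (y m') : ℝ):ℂ) by ring, Complex.exp_add]
    ring
  calc (1 / (N : ℂ)) * ∑ n : Fin N, Ψ₂ n * (starRingEnd ℂ) (Ψ₂ n)
      = ∑ m : Fin M, ∑ m' : Fin M, 4 * (β m : ℂ) * (β m' : ℂ) *
          ((1 / (N : ℂ)) * ∑ n : Fin N,
            (((inner ℝ (θ n) (nv m) : ℝ) : ℂ) * ((inner ℝ (θ n) (nv m') : ℝ) : ℂ) *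
              Complex.exp (Complex.I * (k : ℂ) * ((inner ℝ (θ n) (y m - y m') : ℝ) : ℂ)))) := by
        simp only [key]
        rw [Finset.sum_comm]
        rw [Finset.mul_sum]
        refine Finset.sum_congr rfl fun m _ => ?_
        rw [Finset.sum_comm, Finset.mul_sum]
        refine Finset.sum_congr rfl fun m' _ => ?_
        simp only [Finset.mul_sum]
        exact Finset.sum_congr rfl fun nn _ => by ring
    _ = ∑ m : Fin M, ∑ m' : Fin M, 4 * (β m : ℂ) * (β m' : ℂ) *
          (if m = m' then (1:ℂ) / 2 else 0) := by
        refine Finset.sum_congr rfl fun m _ => Finset.sum_congr rfl fun m' _ => ?_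
        rw [H1]
    _ = ((2 * ∑ m : Fin M, (β m) ^ 2 : ℝ) : ℂ) := by
        push_cast
        rw [Finset.mul_sum]
        refine Finset.sum_congr rfl fun m _ => ?_
        simp
        ring
end

section
/- For every t ∈ ℝ with |t| ≤ 1 and every s ∈ ℝ, 2 t² J₁(s)² ≤ 0.6772 < 1. (This is property (P2) of the paper: the quantity 2 ((z − y_m)/|z − y_m| · n(y_m))² J₁(k|z − y_m|)² is bounded by 2·(0.5819)² = 0.6772, which is strictly less than 1.) -/
open MeasureTheory Real

namespace P2

noncomputable def S (n : ℕ) (x : ℝ) : ℝ :=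
  ∑ k ∈ Finset.range n, (-1)^k * x^(2*k+1) / (2*k+1).factorial

noncomputable def C (n : ℕ) (x : ℝ) : ℝ :=
  ∑ k ∈ Finset.range n, (-1)^k * x^(2*k) / (2*k).factorial

lemma S_zero (n : ℕ) : S n 0 = 0 := by simp [S]

lemma C_succ (n : ℕ) (x : ℝ) :
    C (n+1) x = C n x + (-1)^n * x^(2*n) / (2*n).factorial := by
  simp [C, Finset.sum_range_succ]

lemma S_succ (n : ℕ) (x : ℝ) :
    S (n+1) x = S n x + (-1)^n * x^(2*n+1) / (2*n+1).factorial := by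
  simp [S, Finset.sum_range_succ]

lemma fac_succ_real (m : ℕ) : ((m+1).factorial : ℝ) = (m+1) * (m.factorial : ℝ) := by
  rw [Nat.factorial_succ]; push_cast; ring

lemma hasDerivAt_S (n : ℕ) (t : ℝ) : HasDerivAt (S n) (C n t) t := by
  induction n with
  | zero =>
    have : S 0 = fun _ : ℝ => (0:ℝ) := by
      funext x; simp [S]
    rw [this]; simpa [C] using (hasDerivAt_const t (0:ℝ))
  | succ n ih =>
    have h1 := ((hasDerivAt_pow (2*n+1) t).const_mul ((-1:ℝ)^n)).div_const
      (((2*n+1).factorial : ℝ))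
    have h2 := ih.add h1
    have hfun : S (n+1) = fun x => S n x + (-1:ℝ)^n * x^(2*n+1)/(((2*n+1).factorial:ℕ):ℝ) :=
      funext (S_succ n)
    rw [hfun, C_succ]
    refine h2.congr_deriv (Eq.symm ?_)
    have hfac : (((2*n+1).factorial : ℕ) : ℝ) = (2*n+1) * (((2*n).factorial:ℕ) : ℝ) := by
      have := fac_succ_real (2*n); push_cast at this ⊢; linarith
    have hne : (((2*n).factorial:ℕ) : ℝ) ≠ 0 := by positivity
    have hne2 : (2*(n:ℝ)+1) ≠ 0 := by positivity
    rw [hfac]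
    simp only [Nat.add_sub_cancel]
    push_cast
    field_simp

lemma hasDerivAt_C (n : ℕ) (t : ℝ) : HasDerivAt (C (n+1)) (-(S n t)) t := by
  induction n with
  | zero =>
    have : C 1 = fun _ : ℝ => (1:ℝ) := by
      funext x; simp [C]
    rw [this]; simpa [S] using (hasDerivAt_const t (1:ℝ))
  | succ n ih =>
    have h1 := ((hasDerivAt_pow (2*(n+1)) t).const_mul ((-1:ℝ)^(n+1))).div_const
      (((2*(n+1)).factorial : ℝ))
    have h2 := ih.add h1
    have hfun : C (n+2) = fun x => C (n+1) x + (-1:ℝ)^(n+1) * x^(2*(n+1))/(((2*(n+1)).factorial:ℕ):ℝ) :=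
      funext (C_succ (n+1))
    rw [hfun, S_succ]
    refine h2.congr_deriv (Eq.symm ?_)
    have hfac : (((2*(n+1)).factorial : ℕ) : ℝ) = (2*(n+1)) * (((2*n+1).factorial:ℕ) : ℝ) := by
      have := fac_succ_real (2*n+1)
      have he : 2*(n+1) = (2*n+1)+1 := by ring
      rw [he]; push_cast at this ⊢; linarith
    have hne : (((2*n+1).factorial:ℕ) : ℝ) ≠ 0 := by positivity
    have hne2 : (2*((n:ℝ)+1)) ≠ 0 := by positivity
    rw [hfac]
    have he2 : 2*(n+1) - 1 = 2*n+1 := by omega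
    rw [he2]
    push_cast
    field_simp
    ring


lemma C_zero (n : ℕ) : C (n+1) 0 = 1 := by
  induction n with
  | zero => norm_num [C]
  | succ n ih =>
    rw [show C (n+2) 0 = C (n+1) 0 + (-1)^(n+1) * (0:ℝ)^(2*(n+1)) / (2*(n+1)).factorial by
      simp [C, Finset.sum_range_succ], ih]
    simp

lemma continuous_S (n : ℕ) : Continuous (S n) := by
  unfold S; fun_prop

lemma continuous_C (n : ℕ) : Continuous (C n) := by
  unfold C; fun_prop

lemma step_sin (n : ℕ) (x : ℝ) (hx : 0 ≤ x)
    (h : ∀ t : ℝ, 0 ≤ t → |Real.cos t - C n t| ≤ t^(2*n)/(2*n).factorial) :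
    |Real.sin x - S n x| ≤ x^(2*n+1)/(2*n+1).factorial := by
  have hderiv : ∀ t ∈ Set.uIcc (0:ℝ) x,
      HasDerivAt (fun y => Real.sin y - S n y) (Real.cos t - C n t) t :=
    fun t _ => (Real.hasDerivAt_sin t).sub (hasDerivAt_S n t)
  have hcont : Continuous fun t => Real.cos t - C n t :=
    Real.continuous_cos.sub (continuous_C n)
  have hint := intervalIntegral.integral_eq_sub_of_hasDerivAt hderiv
    (hcont.intervalIntegrable 0 x)
  have heq : Real.sin x - S n x = ∫ t in (0:ℝ)..x, (Real.cos t - C n t) := by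
    rw [hint]; simp [S_zero]
  rw [heq]
  have hb : ∀ t ∈ Set.uIoc (0:ℝ) x, ‖Real.cos t - C n t‖ ≤ t^(2*n)/(2*n).factorial := by
    intro t ht
    rw [Set.uIoc_of_le hx] at ht
    have ht0 : 0 ≤ t := ht.1.le
    simpa using h t ht0
  have hgint : IntervalIntegrable (fun t : ℝ => t^(2*n)/(2*n).factorial) volume 0 x := by
    apply Continuous.intervalIntegrable; fun_prop
  have hle := intervalIntegral.norm_integral_le_abs_of_norm_le
    (g := fun t : ℝ => t^(2*n)/(2*n).factorial)
    ((MeasureTheory.ae_restrict_iff' measurableSet_uIoc).mpr (Filter.Eventually.of_forall hb)) hgint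
  calc |∫ t in (0:ℝ)..x, (Real.cos t - C n t)| ≤
      |∫ t in (0:ℝ)..x, t^(2*n)/(2*n).factorial| := by simpa using hle
  _ = x^(2*n+1)/(2*n+1).factorial := by
      rw [intervalIntegral.integral_div, integral_pow]
      rw [zero_pow (by omega), sub_zero, abs_div, abs_div,
        abs_of_nonneg (pow_nonneg hx _), Nat.abs_cast,
        abs_of_nonneg (by positivity : (0:ℝ) ≤ ((2*n:ℕ):ℝ)+1)]
      rw [show (2*n+1).factorial = (2*n+1) * (2*n).factorial from Nat.factorial_succ _]
      have hne : ((2*n).factorial : ℝ) ≠ 0 := by positivity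
      push_cast
      field_simp
      try ring

lemma step_cos (n : ℕ) (x : ℝ) (hx : 0 ≤ x)
    (h : ∀ t : ℝ, 0 ≤ t → |Real.sin t - S n t| ≤ t^(2*n+1)/(2*n+1).factorial) :
    |Real.cos x - C (n+1) x| ≤ x^(2*(n+1))/(2*(n+1)).factorial := by
  have hderiv : ∀ t ∈ Set.uIcc (0:ℝ) x,
      HasDerivAt (fun y => Real.cos y - C (n+1) y) (-(Real.sin t - S n t)) t := by
    intro t _
    have := (Real.hasDerivAt_cos t).sub (hasDerivAt_C n t)
    exact this.congr_deriv (by ring)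
  have hcont : Continuous fun t => -(Real.sin t - S n t) := by
    exact (Real.continuous_sin.sub (continuous_S n)).neg
  have hint := intervalIntegral.integral_eq_sub_of_hasDerivAt hderiv
    (hcont.intervalIntegrable 0 x)
  have heq : Real.cos x - C (n+1) x = ∫ t in (0:ℝ)..x, -(Real.sin t - S n t) := by
    rw [hint]; simp [C_zero]
  rw [heq]
  have hgint : IntervalIntegrable (fun t : ℝ => t^(2*n+1)/(2*n+1).factorial) volume 0 x := by
    apply Continuous.intervalIntegrable; fun_prop
  have hb : ∀ t ∈ Set.uIoc (0:ℝ) x, ‖-(Real.sin t - S n t)‖ ≤ t^(2*n+1)/(2*n+1).factorial := by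
    intro t ht
    rw [Set.uIoc_of_le hx] at ht
    have ht0 : 0 ≤ t := ht.1.le
    rw [Real.norm_eq_abs, abs_neg]
    exact h t ht0
  have hle := intervalIntegral.norm_integral_le_abs_of_norm_le
    (g := fun t : ℝ => t^(2*n+1)/(2*n+1).factorial)
    ((MeasureTheory.ae_restrict_iff' measurableSet_uIoc).mpr (Filter.Eventually.of_forall hb)) hgint
  calc |∫ t in (0:ℝ)..x, -(Real.sin t - S n t)| ≤
      |∫ t in (0:ℝ)..x, t^(2*n+1)/(2*n+1).factorial| := by simpa using hle
  _ = x^(2*(n+1))/(2*(n+1)).factorial := by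
      rw [intervalIntegral.integral_div, integral_pow]
      rw [zero_pow (by omega), sub_zero, abs_div, abs_div,
        abs_of_nonneg (pow_nonneg hx _), Nat.abs_cast,
        abs_of_nonneg (by positivity : (0:ℝ) ≤ ((2*n+1:ℕ):ℝ)+1)]
      rw [show (2*(n+1)).factorial = (2*n+2) * (2*n+1).factorial from Nat.factorial_succ _]
      have hne : ((2*n+1).factorial : ℝ) ≠ 0 := by positivity
      push_cast
      field_simp
      try ring

lemma taylor_all (n : ℕ) :
    (∀ x : ℝ, 0 ≤ x → |Real.cos x - C n x| ≤ x^(2*n)/(2*n).factorial) ∧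
    (∀ x : ℝ, 0 ≤ x → |Real.sin x - S n x| ≤ x^(2*n+1)/(2*n+1).factorial) := by
  induction n with
  | zero =>
    have hc : ∀ x : ℝ, 0 ≤ x → |Real.cos x - C 0 x| ≤ x^(2*0)/(2*0).factorial := by
      intro x _
      simpa [C] using Real.abs_cos_le_one x
    exact ⟨hc, fun x hx => step_sin 0 x hx hc⟩
  | succ n ih =>
    have hc : ∀ x : ℝ, 0 ≤ x → |Real.cos x - C (n+1) x| ≤ x^(2*(n+1))/(2*(n+1)).factorial :=
      fun x hx => step_cos n x hx ih.2
    refine ⟨hc, fun x hx => ?_⟩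
    have := step_sin (n+1) x hx hc
    simpa using this


noncomputable def Aint (s : ℝ) : ℝ := ∫ τ in (0:ℝ)..π, Real.sin τ * Real.sin (s * Real.sin τ)
noncomputable def Cint (s : ℝ) : ℝ := ∫ τ in (0:ℝ)..π, Real.cos (s * Real.sin τ)
noncomputable def Dint (s : ℝ) : ℝ := ∫ τ in (0:ℝ)..π, (Real.sin τ)^2 * Real.cos (s * Real.sin τ)

lemma L1 (s : ℝ) : (∫ τ in (0:ℝ)..π, Real.cos τ * Real.cos (s * Real.sin τ)) = 0 := by
  rcases eq_or_ne s 0 with rfl | hs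
  · simp [integral_cos]
  · have hderiv : ∀ τ ∈ Set.uIcc (0:ℝ) π,
        HasDerivAt (fun τ => Real.sin (s * Real.sin τ) / s)
          (Real.cos τ * Real.cos (s * Real.sin τ)) τ := by
      intro τ _
      have h1 : HasDerivAt (fun τ : ℝ => s * Real.sin τ) (s * Real.cos τ) τ :=
        (Real.hasDerivAt_sin τ).const_mul s
      have h2 := ((Real.hasDerivAt_sin (s * Real.sin τ)).comp τ h1).div_const s
      refine h2.congr_deriv (Eq.symm ?_)
      field_simp
    have hint : IntervalIntegrable (fun τ => Real.cos τ * Real.cos (s * Real.sin τ)) volume 0 π :=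
      (Real.continuous_cos.mul (by fun_prop)).intervalIntegrable 0 π
    rw [intervalIntegral.integral_eq_sub_of_hasDerivAt hderiv hint]
    simp

lemma L2 (s : ℝ) : π * J1 s = Aint s := by
  unfold J1 Aint
  rw [← mul_assoc, mul_one_div, div_self pi_ne_zero, one_mul]
  have h : ∀ τ : ℝ, Real.cos (τ - s * Real.sin τ) =
      Real.cos τ * Real.cos (s * Real.sin τ) + Real.sin τ * Real.sin (s * Real.sin τ) :=
    fun τ => Real.cos_sub τ (s * Real.sin τ)
  rw [intervalIntegral.integral_congr (fun τ _ => h τ)]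
  rw [intervalIntegral.integral_add
    ((by fun_prop : Continuous fun τ => Real.cos τ * Real.cos (s * Real.sin τ)).intervalIntegrable 0 π)
    ((by fun_prop : Continuous fun τ => Real.sin τ * Real.sin (s * Real.sin τ)).intervalIntegrable 0 π)]
  rw [L1, zero_add]

lemma L8 (s : ℝ) : s * (∫ τ in (0:ℝ)..π, (Real.cos τ)^2 * Real.cos (s * Real.sin τ)) = Aint s := by
  have hderiv : ∀ τ ∈ Set.uIcc (0:ℝ) π,
      HasDerivAt (fun τ => Real.cos τ * Real.sin (s * Real.sin τ))
        (s * ((Real.cos τ)^2 * Real.cos (s * Real.sin τ))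
          - Real.sin τ * Real.sin (s * Real.sin τ)) τ := by
    intro τ _
    have h1 : HasDerivAt (fun τ : ℝ => s * Real.sin τ) (s * Real.cos τ) τ :=
      (Real.hasDerivAt_sin τ).const_mul s
    have h2 := (Real.hasDerivAt_sin (s * Real.sin τ)).comp τ h1
    have h3 := (Real.hasDerivAt_cos τ).mul h2
    refine h3.congr_deriv (Eq.symm ?_)
    simp only [Function.comp]
    ring
  have hi1 : IntervalIntegrable (fun τ => s * ((Real.cos τ)^2 * Real.cos (s * Real.sin τ)))
      volume 0 π := by apply Continuous.intervalIntegrable; fun_prop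
  have hi2 : IntervalIntegrable (fun τ => Real.sin τ * Real.sin (s * Real.sin τ))
      volume 0 π := by apply Continuous.intervalIntegrable; fun_prop
  have hint : IntervalIntegrable (fun τ => s * ((Real.cos τ)^2 * Real.cos (s * Real.sin τ))
      - Real.sin τ * Real.sin (s * Real.sin τ)) volume 0 π := hi1.sub hi2
  have h0 := intervalIntegral.integral_eq_sub_of_hasDerivAt hderiv hint
  rw [intervalIntegral.integral_sub hi1 hi2] at h0
  simp only [Real.sin_pi, Real.cos_pi, Real.sin_zero, Real.cos_zero, mul_zero, zero_mul] at h0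
  have h0' : (∫ τ in (0:ℝ)..π, s * ((Real.cos τ)^2 * Real.cos (s * Real.sin τ))) - Aint s = 0 := by
    simpa [Aint] using h0
  rw [intervalIntegral.integral_const_mul] at h0'
  linarith

lemma hasDerivAt_Cint (s : ℝ) : HasDerivAt Cint (-(Aint s)) s := by
  have key := intervalIntegral.hasDerivAt_integral_of_dominated_loc_of_deriv_le
    (F := fun x τ => Real.cos (x * Real.sin τ))
    (F' := fun x τ => -(Real.sin τ * Real.sin (x * Real.sin τ)))
    (x₀ := s) (a := 0) (b := π) (μ := volume) (s := Metric.ball s 1) (bound := fun _ => 1)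
    (Metric.ball_mem_nhds s one_pos)
    (Filter.Eventually.of_forall fun x => (Continuous.aestronglyMeasurable (by fun_prop)))
    ((by fun_prop : Continuous fun τ => Real.cos (s * Real.sin τ)).intervalIntegrable 0 π)
    (Continuous.aestronglyMeasurable (by fun_prop))
    (Filter.Eventually.of_forall ?_)
    intervalIntegrable_const
    (Filter.Eventually.of_forall ?_)
  · have h2 := key.2
    have : (∫ τ in (0:ℝ)..π, -(Real.sin τ * Real.sin (s * Real.sin τ))) = -(Aint s) := by
      rw [intervalIntegral.integral_neg]; rfl
    rw [this] at h2
    exact h2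
  · intro τ _ x _
    rw [norm_neg, Real.norm_eq_abs, abs_mul]
    exact mul_le_one₀ (Real.abs_sin_le_one τ) (abs_nonneg _) (Real.abs_sin_le_one _)
  · intro τ _ x _
    have h1 : HasDerivAt (fun x : ℝ => x * Real.sin τ) (Real.sin τ) x := hasDerivAt_mul_const _
    have h2 := (Real.hasDerivAt_cos (x * Real.sin τ)).comp x h1
    refine h2.congr_deriv (Eq.symm ?_)
    ring

lemma hasDerivAt_Aint (s : ℝ) : HasDerivAt Aint (Dint s) s := by
  have key := intervalIntegral.hasDerivAt_integral_of_dominated_loc_of_deriv_le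
    (F := fun x τ => Real.sin τ * Real.sin (x * Real.sin τ))
    (F' := fun x τ => (Real.sin τ)^2 * Real.cos (x * Real.sin τ))
    (x₀ := s) (a := 0) (b := π) (μ := volume) (s := Metric.ball s 1) (bound := fun _ => 1)
    (Metric.ball_mem_nhds s one_pos)
    (Filter.Eventually.of_forall fun x => (Continuous.aestronglyMeasurable (by fun_prop)))
    ((by fun_prop : Continuous fun τ => Real.sin τ * Real.sin (s * Real.sin τ)).intervalIntegrable 0 π)
    (Continuous.aestronglyMeasurable (by fun_prop))
    (Filter.Eventually.of_forall ?_)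
    intervalIntegrable_const
    (Filter.Eventually.of_forall ?_)
  · exact key.2
  · intro τ _ x _
    rw [Real.norm_eq_abs, abs_mul, abs_pow]
    exact mul_le_one₀ (pow_le_one₀ (abs_nonneg _) (Real.abs_sin_le_one τ)) (abs_nonneg _)
      (Real.abs_cos_le_one _)
  · intro τ _ x _
    have h1 : HasDerivAt (fun x : ℝ => x * Real.sin τ) (Real.sin τ) x := hasDerivAt_mul_const _
    have h2 := ((Real.hasDerivAt_sin (x * Real.sin τ)).comp x h1).const_mul (Real.sin τ)
    refine h2.congr_deriv (Eq.symm ?_)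
    ring

lemma hasDerivAt_g (y : ℝ) (hy : 0 < y) :
    HasDerivAt (fun x => (Cint x)^2 + (Aint x)^2) (-(2*(Aint y)^2)/y) y := by
  have h1 := ((hasDerivAt_Cint y).pow 2).add ((hasDerivAt_Aint y).pow 2)
  refine h1.congr_deriv (Eq.symm ?_)
  -- need : -(2*(Aint y)^2)/y = 2*Cint y^1*(-(Aint y)) + 2*Aint y^1*(Dint y)
  have hCD : Cint y - Dint y = ∫ τ in (0:ℝ)..π, (Real.cos τ)^2 * Real.cos (y * Real.sin τ) := by
    unfold Cint Dint
    rw [← intervalIntegral.integral_sub (by apply Continuous.intervalIntegrable; fun_prop)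
      (by apply Continuous.intervalIntegrable; fun_prop)]
    apply intervalIntegral.integral_congr
    intro τ _
    show Real.cos (y * Real.sin τ) - (Real.sin τ)^2 * Real.cos (y * Real.sin τ)
      = (Real.cos τ)^2 * Real.cos (y * Real.sin τ)
    linear_combination -Real.cos (y * Real.sin τ) * (Real.sin_sq_add_cos_sq τ)
  have hkey : y * (Cint y - Dint y) = Aint y := by rw [hCD]; exact L8 y
  have hyne : y ≠ 0 := ne_of_gt hy
  field_simp
  linear_combination (2 * Aint y) * hkey

lemma tail_bound (x : ℝ) (hx : (11/5:ℝ) ≤ x) :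
    (Aint x)^2 ≤ (Cint (11/5))^2 + (Aint (11/5))^2 := by
  set g : ℝ → ℝ := fun x => (Cint x)^2 + (Aint x)^2 with hg
  have hmono : AntitoneOn g (Set.Ici (11/5:ℝ)) := by
    have hpos : ∀ y ∈ Set.Ici (11/5:ℝ), (0:ℝ) < y := fun y hy => lt_of_lt_of_le (by norm_num) hy
    apply antitoneOn_of_deriv_nonpos (convex_Ici _)
    · intro y hy
      exact ((hasDerivAt_g y (hpos y hy)).continuousAt).continuousWithinAt
    · intro y hy
      rw [interior_Ici] at hy
      exact ((hasDerivAt_g y (hpos y (Set.mem_Ici.mpr (le_of_lt hy)))).differentiableAt).differentiableWithinAt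
    · intro y hy
      rw [interior_Ici] at hy
      have hy0 : (0:ℝ) < y := lt_of_le_of_lt (by norm_num) hy
      rw [(hasDerivAt_g y hy0).deriv]
      apply div_nonpos_of_nonpos_of_nonneg
      · nlinarith [sq_nonneg (Aint y)]
      · exact le_of_lt hy0
  have h1 : g x ≤ g (11/5) := hmono Set.self_mem_Ici hx hx
  have h2 : (Aint x)^2 ≤ g x := by
    simp only [hg]
    nlinarith [sq_nonneg (Cint x)]
  exact le_trans h2 h1


lemma Aint_series (n : ℕ) (s : ℝ) (hs : 0 ≤ s) :
    |Aint s - π * ∑ k ∈ Finset.range n,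
      (-1:ℝ)^k * (∏ i ∈ Finset.range (k+1), (2*(i:ℝ)+1)/(2*(i:ℝ)+2)) * s^(2*k+1)
        / (2*k+1).factorial|
      ≤ π * (s^(2*n+1)/(2*n+1).factorial) := by
  have hi1 : IntervalIntegrable (fun τ => Real.sin τ * S n (s * Real.sin τ)) volume 0 π := by
    apply Continuous.intervalIntegrable
    exact Real.continuous_sin.mul ((continuous_S n).comp (by fun_prop))
  have hi2 : IntervalIntegrable
      (fun τ => Real.sin τ * (Real.sin (s * Real.sin τ) - S n (s * Real.sin τ))) volume 0 π := by
    apply Continuous.intervalIntegrable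
    exact Real.continuous_sin.mul
      ((Real.continuous_sin.comp (by fun_prop)).sub ((continuous_S n).comp (by fun_prop)))
  have hsplit : Aint s = (∫ τ in (0:ℝ)..π, Real.sin τ * S n (s * Real.sin τ))
      + ∫ τ in (0:ℝ)..π, Real.sin τ * (Real.sin (s * Real.sin τ) - S n (s * Real.sin τ)) := by
    unfold Aint
    rw [← intervalIntegral.integral_add hi1 hi2]
    apply intervalIntegral.integral_congr
    intro τ _
    ring
  have hsum : (∫ τ in (0:ℝ)..π, Real.sin τ * S n (s * Real.sin τ))
      = π * ∑ k ∈ Finset.range n,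
        (-1:ℝ)^k * (∏ i ∈ Finset.range (k+1), (2*(i:ℝ)+1)/(2*(i:ℝ)+2)) * s^(2*k+1)
          / (2*k+1).factorial := by
    have hptwise : ∀ τ ∈ Set.uIcc (0:ℝ) π, Real.sin τ * S n (s * Real.sin τ)
        = ∑ k ∈ Finset.range n,
          ((-1:ℝ)^k * s^(2*k+1) / (2*k+1).factorial) * (Real.sin τ)^(2*(k+1)) := by
      intro τ _
      unfold S
      rw [Finset.mul_sum]
      apply Finset.sum_congr rfl
      intro k _
      rw [mul_pow]
      ring
    rw [intervalIntegral.integral_congr hptwise]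
    rw [intervalIntegral.integral_finset_sum]
    · have : ∀ k ∈ Finset.range n,
          (∫ τ in (0:ℝ)..π, ((-1:ℝ)^k * s^(2*k+1) / (2*k+1).factorial) * (Real.sin τ)^(2*(k+1)))
          = π * ((-1:ℝ)^k * (∏ i ∈ Finset.range (k+1), (2*(i:ℝ)+1)/(2*(i:ℝ)+2)) * s^(2*k+1)
              / (2*k+1).factorial) := by
        intro k _
        rw [intervalIntegral.integral_const_mul, integral_sin_pow_even]
        ring
      rw [Finset.sum_congr rfl this, ← Finset.mul_sum]
    · intro k _
      apply Continuous.intervalIntegrable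
      fun_prop
  have hrem : |∫ τ in (0:ℝ)..π, Real.sin τ * (Real.sin (s * Real.sin τ) - S n (s * Real.sin τ))|
      ≤ (s^(2*n+1)/(2*n+1).factorial) * |π - 0| := by
    have hb : ∀ τ : ℝ, τ ∈ Set.uIoc (0:ℝ) π →
        ‖Real.sin τ * (Real.sin (s * Real.sin τ) - S n (s * Real.sin τ))‖
          ≤ s^(2*n+1)/(2*n+1).factorial := by
      intro τ hτ
      rw [Set.uIoc_of_le Real.pi_pos.le] at hτ
      have hsin0 : 0 ≤ Real.sin τ := Real.sin_nonneg_of_nonneg_of_le_pi hτ.1.le hτ.2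
      have hsin1 : Real.sin τ ≤ 1 := Real.sin_le_one τ
      have hu0 : 0 ≤ s * Real.sin τ := mul_nonneg hs hsin0
      have ht := (taylor_all n).2 (s * Real.sin τ) hu0
      have hup : (s * Real.sin τ)^(2*n+1) ≤ s^(2*n+1) := by
        apply pow_le_pow_left₀ hu0
        exact mul_le_of_le_one_right hs hsin1
      rw [Real.norm_eq_abs, abs_mul]
      have hf : (0:ℝ) < (2*n+1).factorial := by positivity
      calc |Real.sin τ| * |Real.sin (s * Real.sin τ) - S n (s * Real.sin τ)|
          ≤ 1 * ((s * Real.sin τ)^(2*n+1)/(2*n+1).factorial) := by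
            apply mul_le_mul (Real.abs_sin_le_one τ) ht (abs_nonneg _) zero_le_one
        _ ≤ s^(2*n+1)/(2*n+1).factorial := by
            rw [one_mul]
            exact (div_le_div_iff_of_pos_right hf).mpr hup
    exact intervalIntegral.norm_integral_le_of_norm_le_const
      (fun τ hτ => hb τ hτ)
  rw [hsplit]
  calc |(∫ τ in (0:ℝ)..π, Real.sin τ * S n (s * Real.sin τ))
      + (∫ τ in (0:ℝ)..π, Real.sin τ * (Real.sin (s * Real.sin τ) - S n (s * Real.sin τ)))
      - π * ∑ k ∈ Finset.range n,
        (-1:ℝ)^k * (∏ i ∈ Finset.range (k+1), (2*(i:ℝ)+1)/(2*(i:ℝ)+2)) * s^(2*k+1)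
          / (2*k+1).factorial|
      = |∫ τ in (0:ℝ)..π, Real.sin τ * (Real.sin (s * Real.sin τ) - S n (s * Real.sin τ))| := by
        rw [hsum]; congr 1; ring
    _ ≤ (s^(2*n+1)/(2*n+1).factorial) * |π - 0| := hrem
    _ = π * (s^(2*n+1)/(2*n+1).factorial) := by
        rw [sub_zero, abs_of_nonneg Real.pi_pos.le]; ring

lemma Cint_series (n : ℕ) (s : ℝ) (hs : 0 ≤ s) :
    |Cint s - π * ∑ k ∈ Finset.range n,
      (-1:ℝ)^k * (∏ i ∈ Finset.range k, (2*(i:ℝ)+1)/(2*(i:ℝ)+2)) * s^(2*k)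
        / (2*k).factorial|
      ≤ π * (s^(2*n)/(2*n).factorial) := by
  have hi1 : IntervalIntegrable (fun τ => C n (s * Real.sin τ)) volume 0 π := by
    apply Continuous.intervalIntegrable
    exact (continuous_C n).comp (by fun_prop)
  have hi2 : IntervalIntegrable
      (fun τ => Real.cos (s * Real.sin τ) - C n (s * Real.sin τ)) volume 0 π := by
    apply Continuous.intervalIntegrable
    exact (Real.continuous_cos.comp (by fun_prop)).sub ((continuous_C n).comp (by fun_prop))
  have hsplit : Cint s = (∫ τ in (0:ℝ)..π, C n (s * Real.sin τ))
      + ∫ τ in (0:ℝ)..π, (Real.cos (s * Real.sin τ) - C n (s * Real.sin τ)) := by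
    unfold Cint
    rw [← intervalIntegral.integral_add hi1 hi2]
    apply intervalIntegral.integral_congr
    intro τ _
    ring
  have hsum : (∫ τ in (0:ℝ)..π, C n (s * Real.sin τ))
      = π * ∑ k ∈ Finset.range n,
        (-1:ℝ)^k * (∏ i ∈ Finset.range k, (2*(i:ℝ)+1)/(2*(i:ℝ)+2)) * s^(2*k)
          / (2*k).factorial := by
    have hptwise : ∀ τ ∈ Set.uIcc (0:ℝ) π, C n (s * Real.sin τ)
        = ∑ k ∈ Finset.range n,
          ((-1:ℝ)^k * s^(2*k) / (2*k).factorial) * (Real.sin τ)^(2*k) := by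
      intro τ _
      unfold C
      apply Finset.sum_congr rfl
      intro k _
      rw [mul_pow]
      ring
    rw [intervalIntegral.integral_congr hptwise]
    rw [intervalIntegral.integral_finset_sum]
    · have : ∀ k ∈ Finset.range n,
          (∫ τ in (0:ℝ)..π, ((-1:ℝ)^k * s^(2*k) / (2*k).factorial) * (Real.sin τ)^(2*k))
          = π * ((-1:ℝ)^k * (∏ i ∈ Finset.range k, (2*(i:ℝ)+1)/(2*(i:ℝ)+2)) * s^(2*k)
              / (2*k).factorial) := by
        intro k _
        rw [intervalIntegral.integral_const_mul, integral_sin_pow_even]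
        ring
      rw [Finset.sum_congr rfl this, ← Finset.mul_sum]
    · intro k _
      apply Continuous.intervalIntegrable
      fun_prop
  have hrem : |∫ τ in (0:ℝ)..π, (Real.cos (s * Real.sin τ) - C n (s * Real.sin τ))|
      ≤ (s^(2*n)/(2*n).factorial) * |π - 0| := by
    have hb : ∀ τ : ℝ, τ ∈ Set.uIoc (0:ℝ) π →
        ‖Real.cos (s * Real.sin τ) - C n (s * Real.sin τ)‖
          ≤ s^(2*n)/(2*n).factorial := by
      intro τ hτ
      rw [Set.uIoc_of_le Real.pi_pos.le] at hτ
      have hsin0 : 0 ≤ Real.sin τ := Real.sin_nonneg_of_nonneg_of_le_pi hτ.1.le hτ.2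
      have hu0 : 0 ≤ s * Real.sin τ := mul_nonneg hs hsin0
      have ht := (taylor_all n).1 (s * Real.sin τ) hu0
      have hup : (s * Real.sin τ)^(2*n) ≤ s^(2*n) := by
        apply pow_le_pow_left₀ hu0
        exact mul_le_of_le_one_right hs (Real.sin_le_one τ)
      have hf : (0:ℝ) < ((2*n).factorial : ℝ) := by positivity
      rw [Real.norm_eq_abs]
      calc |Real.cos (s * Real.sin τ) - C n (s * Real.sin τ)|
          ≤ (s * Real.sin τ)^(2*n)/(2*n).factorial := ht
        _ ≤ s^(2*n)/(2*n).factorial := (div_le_div_iff_of_pos_right hf).mpr hup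
    exact intervalIntegral.norm_integral_le_of_norm_le_const (fun τ hτ => hb τ hτ)
  rw [hsplit]
  calc |(∫ τ in (0:ℝ)..π, C n (s * Real.sin τ))
      + (∫ τ in (0:ℝ)..π, (Real.cos (s * Real.sin τ) - C n (s * Real.sin τ)))
      - π * ∑ k ∈ Finset.range n,
        (-1:ℝ)^k * (∏ i ∈ Finset.range k, (2*(i:ℝ)+1)/(2*(i:ℝ)+2)) * s^(2*k)
          / (2*k).factorial|
      = |∫ τ in (0:ℝ)..π, (Real.cos (s * Real.sin τ) - C n (s * Real.sin τ))| := by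
        rw [hsum]; congr 1; ring
    _ ≤ (s^(2*n)/(2*n).factorial) * |π - 0| := hrem
    _ = π * (s^(2*n)/(2*n).factorial) := by
        rw [sub_zero, abs_of_nonneg Real.pi_pos.le]; ring


noncomputable def Ppoly (s : ℝ) : ℝ := ((1 : ℝ)/2) * s^1 + ((-1 : ℝ)/16) * s^3 + ((1 : ℝ)/384) * s^5 + ((-1 : ℝ)/18432) * s^7 + ((1 : ℝ)/1474560) * s^9 + ((-1 : ℝ)/176947200) * s^11 + ((1 : ℝ)/29727129600) * s^13 + ((-1 : ℝ)/6658877030400) * s^15 + ((1 : ℝ)/1917756584755200) * s^17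

lemma ival0 (s : ℝ) (h1 : (0 : ℝ) ≤ s) (h2 : s ≤ ((563 : ℝ)/512)) : |Ppoly s| ≤ ((581889 : ℝ)/1000000) := by
  have hx0 : (0:ℝ) ≤ s - (0 : ℝ) := by linarith
  have hx1 : s - (0 : ℝ) ≤ ((563 : ℝ)/512) := by linarith
  have hu3 : (s - (0 : ℝ))^3 ≤ ((178453547 : ℝ)/134217728) := by
    calc (s - (0 : ℝ))^3 ≤ ((563 : ℝ)/512)^3 := by gcongr
      _ = ((178453547 : ℝ)/134217728) := by norm_num
  have hl3 : (0:ℝ) ≤ (s - (0 : ℝ))^3 := by positivity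
  have hu5 : (s - (0 : ℝ))^5 ≤ ((56564242339043 : ℝ)/35184372088832) := by
    calc (s - (0 : ℝ))^5 ≤ ((563 : ℝ)/512)^5 := by gcongr
      _ = ((56564242339043 : ℝ)/35184372088832) := by norm_num
  have hl5 : (0:ℝ) ≤ (s - (0 : ℝ))^5 := by positivity
  have hu7 : (s - (0 : ℝ))^7 ≤ ((17929111329964120667 : ℝ)/9223372036854775808) := by
    calc (s - (0 : ℝ))^7 ≤ ((563 : ℝ)/512)^7 := by gcongr
      _ = ((17929111329964120667 : ℝ)/9223372036854775808) := by norm_num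
  have hl7 : (0:ℝ) ≤ (s - (0 : ℝ))^7 := by positivity
  have hu9 : (s - (0 : ℝ))^9 ≤ ((5682972489147397363698323 : ℝ)/2417851639229258349412352) := by
    calc (s - (0 : ℝ))^9 ≤ ((563 : ℝ)/512)^9 := by gcongr
      _ = ((5682972489147397363698323 : ℝ)/2417851639229258349412352) := by norm_num
  have hl9 : (0:ℝ) ≤ (s - (0 : ℝ))^9 := by positivity
  have hu11 : (s - (0 : ℝ))^11 ≤ ((1801326106912561394974093742987 : ℝ)/633825300114114700748351602688) := by
    calc (s - (0 : ℝ))^11 ≤ ((563 : ℝ)/512)^11 := by gcongr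
      _ = ((1801326106912561394974093742987 : ℝ)/633825300114114700748351602688) := by norm_num
  have hl11 : (0:ℝ) ≤ (s - (0 : ℝ))^11 := by positivity
  have hu13 : (s - (0 : ℝ))^13 ≤ ((570964534781967672803543519620846403 : ℝ)/166153499473114484112975882535043072) := by
    calc (s - (0 : ℝ))^13 ≤ ((563 : ℝ)/512)^13 := by gcongr
      _ = ((570964534781967672803543519620846403 : ℝ)/166153499473114484112975882535043072) := by norm_num
  have hl13 : (0:ℝ) ≤ (s - (0 : ℝ))^13 := by positivity
  have hu15 : (s - (0 : ℝ))^15 ≤ ((180978057625305511280866385870700063512507 : ℝ)/43556142965880123323311949751266331066368) := by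
    calc (s - (0 : ℝ))^15 ≤ ((563 : ℝ)/512)^15 := by gcongr
      _ = ((180978057625305511280866385870700063512507 : ℝ)/43556142965880123323311949751266331066368) := by norm_num
  have hl15 : (0:ℝ) ≤ (s - (0 : ℝ))^15 := by positivity
  have hu17 : (s - (0 : ℝ))^17 ≤ ((57364433947435462605184937463049928431495831283 : ℝ)/11417981541647679048466287755595961091061972992) := by
    calc (s - (0 : ℝ))^17 ≤ ((563 : ℝ)/512)^17 := by gcongr
      _ = ((57364433947435462605184937463049928431495831283 : ℝ)/11417981541647679048466287755595961091061972992) := by norm_num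
  have hl17 : (0:ℝ) ≤ (s - (0 : ℝ))^17 := by positivity
  have hid : Ppoly s = ((1 : ℝ)/2) * (s - (0 : ℝ)) + ((-1 : ℝ)/16) * (s - (0 : ℝ))^3 + ((1 : ℝ)/384) * (s - (0 : ℝ))^5 + ((-1 : ℝ)/18432) * (s - (0 : ℝ))^7 + ((1 : ℝ)/1474560) * (s - (0 : ℝ))^9 + ((-1 : ℝ)/176947200) * (s - (0 : ℝ))^11 + ((1 : ℝ)/29727129600) * (s - (0 : ℝ))^13 + ((-1 : ℝ)/6658877030400) * (s - (0 : ℝ))^15 + ((1 : ℝ)/1917756584755200) * (s - (0 : ℝ))^17 := by unfold Ppoly; ring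
  rw [hid, abs_le]
  constructor <;> linarith [hx0, hx1, hu3, hl3, hu5, hl5, hu7, hl7, hu9, hl9, hu11, hl11, hu13, hl13, hu15, hl15, hu17, hl17]

lemma ival1 (s : ℝ) (h1 : ((563 : ℝ)/512) ≤ s) (h2 : s ≤ ((1407 : ℝ)/1024)) : |Ppoly s| ≤ ((581889 : ℝ)/1000000) := by
  have hx0 : (0:ℝ) ≤ s - ((563 : ℝ)/512) := by linarith
  have hx1 : s - ((563 : ℝ)/512) ≤ ((281 : ℝ)/1024) := by linarith
  have hu2 : (s - ((563 : ℝ)/512))^2 ≤ ((78961 : ℝ)/1048576) := by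
    calc (s - ((563 : ℝ)/512))^2 ≤ ((281 : ℝ)/1024)^2 := by gcongr
      _ = ((78961 : ℝ)/1048576) := by norm_num
  have hl2 : (0:ℝ) ≤ (s - ((563 : ℝ)/512))^2 := by positivity
  have hu3 : (s - ((563 : ℝ)/512))^3 ≤ ((22188041 : ℝ)/1073741824) := by
    calc (s - ((563 : ℝ)/512))^3 ≤ ((281 : ℝ)/1024)^3 := by gcongr
      _ = ((22188041 : ℝ)/1073741824) := by norm_num
  have hl3 : (0:ℝ) ≤ (s - ((563 : ℝ)/512))^3 := by positivity
  have hu4 : (s - ((563 : ℝ)/512))^4 ≤ ((6234839521 : ℝ)/1099511627776) := by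
    calc (s - ((563 : ℝ)/512))^4 ≤ ((281 : ℝ)/1024)^4 := by gcongr
      _ = ((6234839521 : ℝ)/1099511627776) := by norm_num
  have hl4 : (0:ℝ) ≤ (s - ((563 : ℝ)/512))^4 := by positivity
  have hu5 : (s - ((563 : ℝ)/512))^5 ≤ ((1751989905401 : ℝ)/1125899906842624) := by
    calc (s - ((563 : ℝ)/512))^5 ≤ ((281 : ℝ)/1024)^5 := by gcongr
      _ = ((1751989905401 : ℝ)/1125899906842624) := by norm_num
  have hl5 : (0:ℝ) ≤ (s - ((563 : ℝ)/512))^5 := by positivity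
  have hu6 : (s - ((563 : ℝ)/512))^6 ≤ ((492309163417681 : ℝ)/1152921504606846976) := by
    calc (s - ((563 : ℝ)/512))^6 ≤ ((281 : ℝ)/1024)^6 := by gcongr
      _ = ((492309163417681 : ℝ)/1152921504606846976) := by norm_num
  have hl6 : (0:ℝ) ≤ (s - ((563 : ℝ)/512))^6 := by positivity
  have hu7 : (s - ((563 : ℝ)/512))^7 ≤ ((138338874920368361 : ℝ)/1180591620717411303424) := by
    calc (s - ((563 : ℝ)/512))^7 ≤ ((281 : ℝ)/1024)^7 := by gcongr
      _ = ((138338874920368361 : ℝ)/1180591620717411303424) := by norm_num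
  have hl7 : (0:ℝ) ≤ (s - ((563 : ℝ)/512))^7 := by positivity
  have hu8 : (s - ((563 : ℝ)/512))^8 ≤ ((38873223852623509441 : ℝ)/1208925819614629174706176) := by
    calc (s - ((563 : ℝ)/512))^8 ≤ ((281 : ℝ)/1024)^8 := by gcongr
      _ = ((38873223852623509441 : ℝ)/1208925819614629174706176) := by norm_num
  have hl8 : (0:ℝ) ≤ (s - ((563 : ℝ)/512))^8 := by positivity
  have hu9 : (s - ((563 : ℝ)/512))^9 ≤ ((10923375902587206152921 : ℝ)/1237940039285380274899124224) := by
    calc (s - ((563 : ℝ)/512))^9 ≤ ((281 : ℝ)/1024)^9 := by gcongr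
      _ = ((10923375902587206152921 : ℝ)/1237940039285380274899124224) := by norm_num
  have hl9 : (0:ℝ) ≤ (s - ((563 : ℝ)/512))^9 := by positivity
  have hu10 : (s - ((563 : ℝ)/512))^10 ≤ ((3069468628627004928970801 : ℝ)/1267650600228229401496703205376) := by
    calc (s - ((563 : ℝ)/512))^10 ≤ ((281 : ℝ)/1024)^10 := by gcongr
      _ = ((3069468628627004928970801 : ℝ)/1267650600228229401496703205376) := by norm_num
  have hl10 : (0:ℝ) ≤ (s - ((563 : ℝ)/512))^10 := by positivity
  have hu11 : (s - ((563 : ℝ)/512))^11 ≤ ((862520684644188385040795081 : ℝ)/1298074214633706907132624082305024) := by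
    calc (s - ((563 : ℝ)/512))^11 ≤ ((281 : ℝ)/1024)^11 := by gcongr
      _ = ((862520684644188385040795081 : ℝ)/1298074214633706907132624082305024) := by norm_num
  have hl11 : (0:ℝ) ≤ (s - ((563 : ℝ)/512))^11 := by positivity
  have hu12 : (s - ((563 : ℝ)/512))^12 ≤ ((242368312385016936196463417761 : ℝ)/1329227995784915872903807060280344576) := by
    calc (s - ((563 : ℝ)/512))^12 ≤ ((281 : ℝ)/1024)^12 := by gcongr
      _ = ((242368312385016936196463417761 : ℝ)/1329227995784915872903807060280344576) := by norm_num
  have hl12 : (0:ℝ) ≤ (s - ((563 : ℝ)/512))^12 := by positivity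
  have hu13 : (s - ((563 : ℝ)/512))^13 ≤ ((68105495780189759071206220390841 : ℝ)/1361129467683753853853498429727072845824) := by
    calc (s - ((563 : ℝ)/512))^13 ≤ ((281 : ℝ)/1024)^13 := by gcongr
      _ = ((68105495780189759071206220390841 : ℝ)/1361129467683753853853498429727072845824) := by norm_num
  have hl13 : (0:ℝ) ≤ (s - ((563 : ℝ)/512))^13 := by positivity
  have hu14 : (s - ((563 : ℝ)/512))^14 ≤ ((19137644314233322299008947929826321 : ℝ)/1393796574908163946345982392040522594123776) := by
    calc (s - ((563 : ℝ)/512))^14 ≤ ((281 : ℝ)/1024)^14 := by gcongr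
      _ = ((19137644314233322299008947929826321 : ℝ)/1393796574908163946345982392040522594123776) := by norm_num
  have hl14 : (0:ℝ) ≤ (s - ((563 : ℝ)/512))^14 := by positivity
  have hu15 : (s - ((563 : ℝ)/512))^15 ≤ ((5377678052299563566021514368281196201 : ℝ)/1427247692705959881058285969449495136382746624) := by
    calc (s - ((563 : ℝ)/512))^15 ≤ ((281 : ℝ)/1024)^15 := by gcongr
      _ = ((5377678052299563566021514368281196201 : ℝ)/1427247692705959881058285969449495136382746624) := by norm_num
  have hl15 : (0:ℝ) ≤ (s - ((563 : ℝ)/512))^15 := by positivity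
  have hu16 : (s - ((563 : ℝ)/512))^16 ≤ ((1511127532696177362052045537487016132481 : ℝ)/1461501637330902918203684832716283019655932542976) := by
    calc (s - ((563 : ℝ)/512))^16 ≤ ((281 : ℝ)/1024)^16 := by gcongr
      _ = ((1511127532696177362052045537487016132481 : ℝ)/1461501637330902918203684832716283019655932542976) := by norm_num
  have hl16 : (0:ℝ) ≤ (s - ((563 : ℝ)/512))^16 := by positivity
  have hu17 : (s - ((563 : ℝ)/512))^17 ≤ ((424626836687625838736624796033851533227161 : ℝ)/1496577676626844588240573268701473812127674924007424) := by
    calc (s - ((563 : ℝ)/512))^17 ≤ ((281 : ℝ)/1024)^17 := by gcongr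
      _ = ((424626836687625838736624796033851533227161 : ℝ)/1496577676626844588240573268701473812127674924007424) := by norm_num
  have hl17 : (0:ℝ) ≤ (s - ((563 : ℝ)/512))^17 := by positivity
  have hid : Ppoly s = ((10308812856808783828778734137654520300405084938065480404197107 : ℝ)/21896909286108166363767405662734477739217992073408181331558400) + ((12473726940007795254562241518046413722803320267901825709137 : ℝ)/42767400949430012429233214185028276834410140768375354163200) * (s - ((563 : ℝ)/512)) + ((-1809857865458718476888797432195835267252287145609407637 : ℝ)/10441259997419436628230765181891669149025913273529139200) * (s - ((563 : ℝ)/512))^2 + ((-687031117364451507503600583693840163301000132990579 : ℝ)/20393085932459837164513213245882166306691236862361600) * (s - ((563 : ℝ)/512))^3 + ((27145854223293613912952256220997403376280307571 : ℝ)/2276014054962035397825135406906491775300361256960) * (s - ((563 : ℝ)/512))^4 + ((4276954395317803943651413591141108951720331 : ℝ)/3175242822212660990269441136867315534738227200) * (s - ((563 : ℝ)/512))^5 + ((-7509091461524915832776767824476489588993 : ℝ)/21705761479969362238170007771553914788249600) * (s - ((563 : ℝ)/512))^6 + ((-324772971346448083099578123582611249 : ℝ)/11870338309358244973999223000068547149824)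 * (s - ((563 : ℝ)/512))^7 + ((12842742622762658327865323420422561 : ℝ)/2318425451046532221484223242200888115200) * (s - ((563 : ℝ)/512))^8 + ((304472334349026697728895779679 : ℝ)/905634941815051649017274703984721920) * (s - ((563 : ℝ)/512))^9 + ((-24883423679665907797629023 : ℝ)/442204561433130687996716164055040) * (s - ((563 : ℝ)/512))^10 + ((-1707047197336874302411 : ℝ)/616914845749345267852561612800) * (s - ((563 : ℝ)/512))^11 + ((136054674269248657 : ℝ)/344260516601197136078438400) * (s - ((563 : ℝ)/512))^12 + ((77130725632549 : ℝ)/4706686750406992094822400) * (s - ((563 : ℝ)/512))^13 + ((-12905693477 : ℝ)/6434923291572059504640) * (s - ((563 : ℝ)/512))^14 + ((-4048711 : ℝ)/62841047769258393600) * (s - ((563 : ℝ)/512))^15 + ((9571 : ℝ)/981891371394662400) * (s - ((563 : ℝ)/512))^16 + ((1 : ℝ)/1917756584755200) * (s - ((563 : ℝ)/512))^17 := by unfold Ppoly; ring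
  rw [hid, abs_le]
  constructor <;> linarith [hx0, hx1, hu2, hl2, hu3, hl3, hu4, hl4, hu5, hl5, hu6, hl6, hu7, hl7, hu8, hl8, hu9, hl9, hu10, hl10, hu11, hl11, hu12, hl12, hu13, hl13, hu14, hl14, hu15, hl15, hu16, hl16, hu17, hl17]

lemma ival2 (s : ℝ) (h1 : ((1407 : ℝ)/1024) ≤ s) (h2 : s ≤ ((809 : ℝ)/512)) : |Ppoly s| ≤ ((581889 : ℝ)/1000000) := by
  have hx0 : (0:ℝ) ≤ s - ((1407 : ℝ)/1024) := by linarith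
  have hx1 : s - ((1407 : ℝ)/1024) ≤ ((211 : ℝ)/1024) := by linarith
  have hu2 : (s - ((1407 : ℝ)/1024))^2 ≤ ((44521 : ℝ)/1048576) := by
    calc (s - ((1407 : ℝ)/1024))^2 ≤ ((211 : ℝ)/1024)^2 := by gcongr
      _ = ((44521 : ℝ)/1048576) := by norm_num
  have hl2 : (0:ℝ) ≤ (s - ((1407 : ℝ)/1024))^2 := by positivity
  have hu3 : (s - ((1407 : ℝ)/1024))^3 ≤ ((9393931 : ℝ)/1073741824) := by
    calc (s - ((1407 : ℝ)/1024))^3 ≤ ((211 : ℝ)/1024)^3 := by gcongr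
      _ = ((9393931 : ℝ)/1073741824) := by norm_num
  have hl3 : (0:ℝ) ≤ (s - ((1407 : ℝ)/1024))^3 := by positivity
  have hu4 : (s - ((1407 : ℝ)/1024))^4 ≤ ((1982119441 : ℝ)/1099511627776) := by
    calc (s - ((1407 : ℝ)/1024))^4 ≤ ((211 : ℝ)/1024)^4 := by gcongr
      _ = ((1982119441 : ℝ)/1099511627776) := by norm_num
  have hl4 : (0:ℝ) ≤ (s - ((1407 : ℝ)/1024))^4 := by positivity
  have hu5 : (s - ((1407 : ℝ)/1024))^5 ≤ ((418227202051 : ℝ)/1125899906842624) := by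
    calc (s - ((1407 : ℝ)/1024))^5 ≤ ((211 : ℝ)/1024)^5 := by gcongr
      _ = ((418227202051 : ℝ)/1125899906842624) := by norm_num
  have hl5 : (0:ℝ) ≤ (s - ((1407 : ℝ)/1024))^5 := by positivity
  have hu6 : (s - ((1407 : ℝ)/1024))^6 ≤ ((88245939632761 : ℝ)/1152921504606846976) := by
    calc (s - ((1407 : ℝ)/1024))^6 ≤ ((211 : ℝ)/1024)^6 := by gcongr
      _ = ((88245939632761 : ℝ)/1152921504606846976) := by norm_num
  have hl6 : (0:ℝ) ≤ (s - ((1407 : ℝ)/1024))^6 := by positivity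
  have hu7 : (s - ((1407 : ℝ)/1024))^7 ≤ ((18619893262512571 : ℝ)/1180591620717411303424) := by
    calc (s - ((1407 : ℝ)/1024))^7 ≤ ((211 : ℝ)/1024)^7 := by gcongr
      _ = ((18619893262512571 : ℝ)/1180591620717411303424) := by norm_num
  have hl7 : (0:ℝ) ≤ (s - ((1407 : ℝ)/1024))^7 := by positivity
  have hu8 : (s - ((1407 : ℝ)/1024))^8 ≤ ((3928797478390152481 : ℝ)/1208925819614629174706176) := by
    calc (s - ((1407 : ℝ)/1024))^8 ≤ ((211 : ℝ)/1024)^8 := by gcongr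
      _ = ((3928797478390152481 : ℝ)/1208925819614629174706176) := by norm_num
  have hl8 : (0:ℝ) ≤ (s - ((1407 : ℝ)/1024))^8 := by positivity
  have hu9 : (s - ((1407 : ℝ)/1024))^9 ≤ ((828976267940322173491 : ℝ)/1237940039285380274899124224) := by
    calc (s - ((1407 : ℝ)/1024))^9 ≤ ((211 : ℝ)/1024)^9 := by gcongr
      _ = ((828976267940322173491 : ℝ)/1237940039285380274899124224) := by norm_num
  have hl9 : (0:ℝ) ≤ (s - ((1407 : ℝ)/1024))^9 := by positivity
  have hu10 : (s - ((1407 : ℝ)/1024))^10 ≤ ((174913992535407978606601 : ℝ)/1267650600228229401496703205376) := by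
    calc (s - ((1407 : ℝ)/1024))^10 ≤ ((211 : ℝ)/1024)^10 := by gcongr
      _ = ((174913992535407978606601 : ℝ)/1267650600228229401496703205376) := by norm_num
  have hl10 : (0:ℝ) ≤ (s - ((1407 : ℝ)/1024))^10 := by positivity
  have hu11 : (s - ((1407 : ℝ)/1024))^11 ≤ ((36906852424971083485992811 : ℝ)/1298074214633706907132624082305024) := by
    calc (s - ((1407 : ℝ)/1024))^11 ≤ ((211 : ℝ)/1024)^11 := by gcongr
      _ = ((36906852424971083485992811 : ℝ)/1298074214633706907132624082305024) := by norm_num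
  have hl11 : (0:ℝ) ≤ (s - ((1407 : ℝ)/1024))^11 := by positivity
  have hu12 : (s - ((1407 : ℝ)/1024))^12 ≤ ((7787345861668898615544483121 : ℝ)/1329227995784915872903807060280344576) := by
    calc (s - ((1407 : ℝ)/1024))^12 ≤ ((211 : ℝ)/1024)^12 := by gcongr
      _ = ((7787345861668898615544483121 : ℝ)/1329227995784915872903807060280344576) := by norm_num
  have hl12 : (0:ℝ) ≤ (s - ((1407 : ℝ)/1024))^12 := by positivity
  have hu13 : (s - ((1407 : ℝ)/1024))^13 ≤ ((1643129976812137607879885938531 : ℝ)/1361129467683753853853498429727072845824) := by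
    calc (s - ((1407 : ℝ)/1024))^13 ≤ ((211 : ℝ)/1024)^13 := by gcongr
      _ = ((1643129976812137607879885938531 : ℝ)/1361129467683753853853498429727072845824) := by norm_num
  have hl13 : (0:ℝ) ≤ (s - ((1407 : ℝ)/1024))^13 := by positivity
  have hu14 : (s - ((1407 : ℝ)/1024))^14 ≤ ((346700425107361035262655933030041 : ℝ)/1393796574908163946345982392040522594123776) := by
    calc (s - ((1407 : ℝ)/1024))^14 ≤ ((211 : ℝ)/1024)^14 := by gcongr
      _ = ((346700425107361035262655933030041 : ℝ)/1393796574908163946345982392040522594123776) := by norm_num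
  have hl14 : (0:ℝ) ≤ (s - ((1407 : ℝ)/1024))^14 := by positivity
  have hu15 : (s - ((1407 : ℝ)/1024))^15 ≤ ((73153789697653178440420401869338651 : ℝ)/1427247692705959881058285969449495136382746624) := by
    calc (s - ((1407 : ℝ)/1024))^15 ≤ ((211 : ℝ)/1024)^15 := by gcongr
      _ = ((73153789697653178440420401869338651 : ℝ)/1427247692705959881058285969449495136382746624) := by norm_num
  have hl15 : (0:ℝ) ≤ (s - ((1407 : ℝ)/1024))^15 := by positivity
  have hu16 : (s - ((1407 : ℝ)/1024))^16 ≤ ((15435449626204820650928704794430455361 : ℝ)/1461501637330902918203684832716283019655932542976) := by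
    calc (s - ((1407 : ℝ)/1024))^16 ≤ ((211 : ℝ)/1024)^16 := by gcongr
      _ = ((15435449626204820650928704794430455361 : ℝ)/1461501637330902918203684832716283019655932542976) := by norm_num
  have hl16 : (0:ℝ) ≤ (s - ((1407 : ℝ)/1024))^16 := by positivity
  have hu17 : (s - ((1407 : ℝ)/1024))^17 ≤ ((3256879871129217157345956711624826081171 : ℝ)/1496577676626844588240573268701473812127674924007424) := by
    calc (s - ((1407 : ℝ)/1024))^17 ≤ ((211 : ℝ)/1024)^17 := by gcongr
      _ = ((3256879871129217157345956711624826081171 : ℝ)/1496577676626844588240573268701473812127674924007424) := by norm_num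
  have hl17 : (0:ℝ) ≤ (s - ((1407 : ℝ)/1024))^17 := by positivity
  have hid : Ppoly s = ((43158008112269171840758671986007106559708386944980083157972679 : ℝ)/80346902212949513777098104617058130126110149689139641765068800) + ((14903570544185388011547694333008325709329405921912138231369 : ℝ)/78463771692333509547947367790095830201279443055800431411200) * (s - ((1407 : ℝ)/1024)) + ((-1871893168798729771662968240163460947819287495272480713 : ℝ)/9578097130411805364739668919689432397617119513647513600) * (s - ((1407 : ℝ)/1024))^2 + ((-184559363354785954323504146169480292749274303359379 : ℝ)/9353610478917778676503582929384211325797968275046400) * (s - ((1407 : ℝ)/1024))^3 + ((48838889465378563134004384522410065757909290113 : ℝ)/3653754093327257295509212081790707549139831357440) * (s - ((1407 : ℝ)/1024))^4 + ((39645240788037569151113776527172219565785561 : ℝ)/53521788476473495539685723854356067614352998400) * (s - ((1407 : ℝ)/1024))^5 + ((-2019143774591962295650638750979286245957 : ℝ)/5226737155905614798797433970151959727964160) * (s - ((1407 : ℝ)/1024))^6 + ((-220994356733873102646373079324654797 : ℝ)/15312706511442230855851857334429569515520) * (s - ((1407 : ℝ)/1024))^7 + ((205058758332204900527440194033309 :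 ℝ)/33230699894622896822595176507008614400) * (s - ((1407 : ℝ)/1024))^8 + ((10057476900027979230987011327 : ℝ)/58413339658516810820968083703726080) * (s - ((1407 : ℝ)/1024))^9 + ((-892378776029312657116339 : ℝ)/14261069252567580766837911060480) * (s - ((1407 : ℝ)/1024))^10 + ((-289313683282470743647 : ℝ)/208902381629407921389227212800) * (s - ((1407 : ℝ)/1024))^11 + ((179291042269526239 : ℝ)/408012464119937346463334400) * (s - ((1407 : ℝ)/1024))^12 + ((69390358895341 : ℝ)/8367443111834652613017600) * (s - ((1407 : ℝ)/1024))^13 + ((-118503905 : ℝ)/54475541092673519616) * (s - ((1407 : ℝ)/1024))^14 + ((-454967 : ℝ)/27929354564114841600) * (s - ((1407 : ℝ)/1024))^15 + ((1139 : ℝ)/93513463942348800) * (s - ((1407 : ℝ)/1024))^16 + ((1 : ℝ)/1917756584755200) * (s - ((1407 : ℝ)/1024))^17 := by unfold Ppoly; ring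
  rw [hid, abs_le]
  constructor <;> linarith [hx0, hx1, hu2, hl2, hu3, hl3, hu4, hl4, hu5, hl5, hu6, hl6, hu7, hl7, hu8, hl8, hu9, hl9, hu10, hl10, hu11, hl11, hu12, hl12, hu13, hl13, hu14, hl14, hu15, hl15, hu16, hl16, hu17, hl17]

lemma ival3 (s : ℝ) (h1 : ((809 : ℝ)/512) ≤ s) (h2 : s ≤ ((1697 : ℝ)/1024)) : |Ppoly s| ≤ ((581889 : ℝ)/1000000) := by
  have hx0 : (0:ℝ) ≤ s - ((809 : ℝ)/512) := by linarith
  have hx1 : s - ((809 : ℝ)/512) ≤ ((79 : ℝ)/1024) := by linarith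
  have hu2 : (s - ((809 : ℝ)/512))^2 ≤ ((6241 : ℝ)/1048576) := by
    calc (s - ((809 : ℝ)/512))^2 ≤ ((79 : ℝ)/1024)^2 := by gcongr
      _ = ((6241 : ℝ)/1048576) := by norm_num
  have hl2 : (0:ℝ) ≤ (s - ((809 : ℝ)/512))^2 := by positivity
  have hu3 : (s - ((809 : ℝ)/512))^3 ≤ ((493039 : ℝ)/1073741824) := by
    calc (s - ((809 : ℝ)/512))^3 ≤ ((79 : ℝ)/1024)^3 := by gcongr
      _ = ((493039 : ℝ)/1073741824) := by norm_num
  have hl3 : (0:ℝ) ≤ (s - ((809 : ℝ)/512))^3 := by positivity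
  have hu4 : (s - ((809 : ℝ)/512))^4 ≤ ((38950081 : ℝ)/1099511627776) := by
    calc (s - ((809 : ℝ)/512))^4 ≤ ((79 : ℝ)/1024)^4 := by gcongr
      _ = ((38950081 : ℝ)/1099511627776) := by norm_num
  have hl4 : (0:ℝ) ≤ (s - ((809 : ℝ)/512))^4 := by positivity
  have hu5 : (s - ((809 : ℝ)/512))^5 ≤ ((3077056399 : ℝ)/1125899906842624) := by
    calc (s - ((809 : ℝ)/512))^5 ≤ ((79 : ℝ)/1024)^5 := by gcongr
      _ = ((3077056399 : ℝ)/1125899906842624) := by norm_num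
  have hl5 : (0:ℝ) ≤ (s - ((809 : ℝ)/512))^5 := by positivity
  have hu6 : (s - ((809 : ℝ)/512))^6 ≤ ((243087455521 : ℝ)/1152921504606846976) := by
    calc (s - ((809 : ℝ)/512))^6 ≤ ((79 : ℝ)/1024)^6 := by gcongr
      _ = ((243087455521 : ℝ)/1152921504606846976) := by norm_num
  have hl6 : (0:ℝ) ≤ (s - ((809 : ℝ)/512))^6 := by positivity
  have hu7 : (s - ((809 : ℝ)/512))^7 ≤ ((19203908986159 : ℝ)/1180591620717411303424) := by
    calc (s - ((809 : ℝ)/512))^7 ≤ ((79 : ℝ)/1024)^7 := by gcongr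
      _ = ((19203908986159 : ℝ)/1180591620717411303424) := by norm_num
  have hl7 : (0:ℝ) ≤ (s - ((809 : ℝ)/512))^7 := by positivity
  have hu8 : (s - ((809 : ℝ)/512))^8 ≤ ((1517108809906561 : ℝ)/1208925819614629174706176) := by
    calc (s - ((809 : ℝ)/512))^8 ≤ ((79 : ℝ)/1024)^8 := by gcongr
      _ = ((1517108809906561 : ℝ)/1208925819614629174706176) := by norm_num
  have hl8 : (0:ℝ) ≤ (s - ((809 : ℝ)/512))^8 := by positivity
  have hu9 : (s - ((809 : ℝ)/512))^9 ≤ ((119851595982618319 : ℝ)/1237940039285380274899124224) := by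
    calc (s - ((809 : ℝ)/512))^9 ≤ ((79 : ℝ)/1024)^9 := by gcongr
      _ = ((119851595982618319 : ℝ)/1237940039285380274899124224) := by norm_num
  have hl9 : (0:ℝ) ≤ (s - ((809 : ℝ)/512))^9 := by positivity
  have hu10 : (s - ((809 : ℝ)/512))^10 ≤ ((9468276082626847201 : ℝ)/1267650600228229401496703205376) := by
    calc (s - ((809 : ℝ)/512))^10 ≤ ((79 : ℝ)/1024)^10 := by gcongr
      _ = ((9468276082626847201 : ℝ)/1267650600228229401496703205376) := by norm_num
  have hl10 : (0:ℝ) ≤ (s - ((809 : ℝ)/512))^10 := by positivity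
  have hu11 : (s - ((809 : ℝ)/512))^11 ≤ ((747993810527520928879 : ℝ)/1298074214633706907132624082305024) := by
    calc (s - ((809 : ℝ)/512))^11 ≤ ((79 : ℝ)/1024)^11 := by gcongr
      _ = ((747993810527520928879 : ℝ)/1298074214633706907132624082305024) := by norm_num
  have hl11 : (0:ℝ) ≤ (s - ((809 : ℝ)/512))^11 := by positivity
  have hu12 : (s - ((809 : ℝ)/512))^12 ≤ ((59091511031674153381441 : ℝ)/1329227995784915872903807060280344576) := by
    calc (s - ((809 : ℝ)/512))^12 ≤ ((79 : ℝ)/1024)^12 := by gcongr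
      _ = ((59091511031674153381441 : ℝ)/1329227995784915872903807060280344576) := by norm_num
  have hl12 : (0:ℝ) ≤ (s - ((809 : ℝ)/512))^12 := by positivity
  have hu13 : (s - ((809 : ℝ)/512))^13 ≤ ((4668229371502258117133839 : ℝ)/1361129467683753853853498429727072845824) := by
    calc (s - ((809 : ℝ)/512))^13 ≤ ((79 : ℝ)/1024)^13 := by gcongr
      _ = ((4668229371502258117133839 : ℝ)/1361129467683753853853498429727072845824) := by norm_num
  have hl13 : (0:ℝ) ≤ (s - ((809 : ℝ)/512))^13 := by positivity
  have hu14 : (s - ((809 : ℝ)/512))^14 ≤ ((368790120348678391253573281 : ℝ)/1393796574908163946345982392040522594123776) := by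
    calc (s - ((809 : ℝ)/512))^14 ≤ ((79 : ℝ)/1024)^14 := by gcongr
      _ = ((368790120348678391253573281 : ℝ)/1393796574908163946345982392040522594123776) := by norm_num
  have hl14 : (0:ℝ) ≤ (s - ((809 : ℝ)/512))^14 := by positivity
  have hu15 : (s - ((809 : ℝ)/512))^15 ≤ ((29134419507545592909032289199 : ℝ)/1427247692705959881058285969449495136382746624) := by
    calc (s - ((809 : ℝ)/512))^15 ≤ ((79 : ℝ)/1024)^15 := by gcongr
      _ = ((29134419507545592909032289199 : ℝ)/1427247692705959881058285969449495136382746624) := by norm_num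
  have hl15 : (0:ℝ) ≤ (s - ((809 : ℝ)/512))^15 := by positivity
  have hu16 : (s - ((809 : ℝ)/512))^16 ≤ ((2301619141096101839813550846721 : ℝ)/1461501637330902918203684832716283019655932542976) := by
    calc (s - ((809 : ℝ)/512))^16 ≤ ((79 : ℝ)/1024)^16 := by gcongr
      _ = ((2301619141096101839813550846721 : ℝ)/1461501637330902918203684832716283019655932542976) := by norm_num
  have hl16 : (0:ℝ) ≤ (s - ((809 : ℝ)/512))^16 := by positivity
  have hu17 : (s - ((809 : ℝ)/512))^17 ≤ ((181827912146592045345270516890959 : ℝ)/1496577676626844588240573268701473812127674924007424) := by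
    calc (s - ((809 : ℝ)/512))^17 ≤ ((79 : ℝ)/1024)^17 := by gcongr
      _ = ((181827912146592045345270516890959 : ℝ)/1496577676626844588240573268701473812127674924007424) := by norm_num
  have hl17 : (0:ℝ) ≤ (s - ((809 : ℝ)/512))^17 := by positivity
  have hid : Ppoly s = ((12433901179810698548032581262282519718590305053831073194301353 : ℝ)/21896909286108166363767405662734477739217992073408181331558400) + ((4591587290693288232027736609424701279264984030019506161809 : ℝ)/42767400949430012429233214185028276834410140768375354163200) * (s - ((809 : ℝ)/512)) + ((-2131818335713324718306436964352040249177695676819738839 : ℝ)/10441259997419436628230765181891669149025913273529139200) * (s - ((809 : ℝ)/512))^2 + ((-172690295957721611890299299661379316711258765280251 : ℝ)/20393085932459837164513213245882166306691236862361600) * (s - ((809 : ℝ)/512))^3 + ((31591664230442523701281939319037776108488881433 : ℝ)/2276014054962035397825135406906491775300361256960) * (s - ((809 : ℝ)/512))^4 + ((804329141896901398136463813472030498439963 : ℝ)/3175242822212660990269441136867315534738227200) * (s - ((809 : ℝ)/512))^5 + ((-1735108567379654399835683203524376883791 : ℝ)/4341152295993872447634001554310782957649920) * (s - ((809 : ℝ)/512))^6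 + ((-241156976570154547444586251471460317 : ℝ)/59351691546791224869996115000342735749120) * (s - ((809 : ℝ)/512))^7 + ((14765829830171452554059044674060403 : ℝ)/2318425451046532221484223242200888115200) * (s - ((809 : ℝ)/512))^8 + ((37005030101274872374780514623 : ℝ)/905634941815051649017274703984721920) * (s - ((809 : ℝ)/512))^9 + ((-28506864489008628135599813 : ℝ)/442204561433130687996716164055040) * (s - ((809 : ℝ)/512))^10 + ((-171414805039449853747 : ℝ)/616914845749345267852561612800) * (s - ((809 : ℝ)/512))^11 + ((156022654234157971 : ℝ)/344260516601197136078438400) * (s - ((809 : ℝ)/512))^12 + ((9445303000309 : ℝ)/4706686750406992094822400) * (s - ((809 : ℝ)/512))^13 + ((-2780593675 : ℝ)/1286984658314411900928) * (s - ((809 : ℝ)/512))^14 + ((1688993 : ℝ)/62841047769258393600) * (s - ((809 : ℝ)/512))^15 + ((13753 : ℝ)/981891371394662400) * (s - ((809 : ℝ)/512))^16 + ((1 : ℝ)/1917756584755200) * (s - ((809 : ℝ)/512))^17 := by unfold Ppoly; ring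
  rw [hid, abs_le]
  constructor <;> linarith [hx0, hx1, hu2, hl2, hu3, hl3, hu4, hl4, hu5, hl5, hu6, hl6, hu7, hl7, hu8, hl8, hu9, hl9, hu10, hl10, hu11, hl11, hu12, hl12, hu13, hl13, hu14, hl14, hu15, hl15, hu16, hl16, hu17, hl17]

lemma ival4 (s : ℝ) (h1 : ((1697 : ℝ)/1024) ≤ s) (h2 : s ≤ ((883 : ℝ)/512)) : |Ppoly s| ≤ ((581889 : ℝ)/1000000) := by
  have hx0 : (0:ℝ) ≤ s - ((1697 : ℝ)/1024) := by linarith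
  have hx1 : s - ((1697 : ℝ)/1024) ≤ ((69 : ℝ)/1024) := by linarith
  have hu2 : (s - ((1697 : ℝ)/1024))^2 ≤ ((4761 : ℝ)/1048576) := by
    calc (s - ((1697 : ℝ)/1024))^2 ≤ ((69 : ℝ)/1024)^2 := by gcongr
      _ = ((4761 : ℝ)/1048576) := by norm_num
  have hl2 : (0:ℝ) ≤ (s - ((1697 : ℝ)/1024))^2 := by positivity
  have hu3 : (s - ((1697 : ℝ)/1024))^3 ≤ ((328509 : ℝ)/1073741824) := by
    calc (s - ((1697 : ℝ)/1024))^3 ≤ ((69 : ℝ)/1024)^3 := by gcongr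
      _ = ((328509 : ℝ)/1073741824) := by norm_num
  have hl3 : (0:ℝ) ≤ (s - ((1697 : ℝ)/1024))^3 := by positivity
  have hu4 : (s - ((1697 : ℝ)/1024))^4 ≤ ((22667121 : ℝ)/1099511627776) := by
    calc (s - ((1697 : ℝ)/1024))^4 ≤ ((69 : ℝ)/1024)^4 := by gcongr
      _ = ((22667121 : ℝ)/1099511627776) := by norm_num
  have hl4 : (0:ℝ) ≤ (s - ((1697 : ℝ)/1024))^4 := by positivity
  have hu5 : (s - ((1697 : ℝ)/1024))^5 ≤ ((1564031349 : ℝ)/1125899906842624) := by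
    calc (s - ((1697 : ℝ)/1024))^5 ≤ ((69 : ℝ)/1024)^5 := by gcongr
      _ = ((1564031349 : ℝ)/1125899906842624) := by norm_num
  have hl5 : (0:ℝ) ≤ (s - ((1697 : ℝ)/1024))^5 := by positivity
  have hu6 : (s - ((1697 : ℝ)/1024))^6 ≤ ((107918163081 : ℝ)/1152921504606846976) := by
    calc (s - ((1697 : ℝ)/1024))^6 ≤ ((69 : ℝ)/1024)^6 := by gcongr
      _ = ((107918163081 : ℝ)/1152921504606846976) := by norm_num
  have hl6 : (0:ℝ) ≤ (s - ((1697 : ℝ)/1024))^6 := by positivity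
  have hu7 : (s - ((1697 : ℝ)/1024))^7 ≤ ((7446353252589 : ℝ)/1180591620717411303424) := by
    calc (s - ((1697 : ℝ)/1024))^7 ≤ ((69 : ℝ)/1024)^7 := by gcongr
      _ = ((7446353252589 : ℝ)/1180591620717411303424) := by norm_num
  have hl7 : (0:ℝ) ≤ (s - ((1697 : ℝ)/1024))^7 := by positivity
  have hu8 : (s - ((1697 : ℝ)/1024))^8 ≤ ((513798374428641 : ℝ)/1208925819614629174706176) := by
    calc (s - ((1697 : ℝ)/1024))^8 ≤ ((69 : ℝ)/1024)^8 := by gcongr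
      _ = ((513798374428641 : ℝ)/1208925819614629174706176) := by norm_num
  have hl8 : (0:ℝ) ≤ (s - ((1697 : ℝ)/1024))^8 := by positivity
  have hu9 : (s - ((1697 : ℝ)/1024))^9 ≤ ((35452087835576229 : ℝ)/1237940039285380274899124224) := by
    calc (s - ((1697 : ℝ)/1024))^9 ≤ ((69 : ℝ)/1024)^9 := by gcongr
      _ = ((35452087835576229 : ℝ)/1237940039285380274899124224) := by norm_num
  have hl9 : (0:ℝ) ≤ (s - ((1697 : ℝ)/1024))^9 := by positivity
  have hu10 : (s - ((1697 : ℝ)/1024))^10 ≤ ((2446194060654759801 : ℝ)/1267650600228229401496703205376) := by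
    calc (s - ((1697 : ℝ)/1024))^10 ≤ ((69 : ℝ)/1024)^10 := by gcongr
      _ = ((2446194060654759801 : ℝ)/1267650600228229401496703205376) := by norm_num
  have hl10 : (0:ℝ) ≤ (s - ((1697 : ℝ)/1024))^10 := by positivity
  have hu11 : (s - ((1697 : ℝ)/1024))^11 ≤ ((168787390185178426269 : ℝ)/1298074214633706907132624082305024) := by
    calc (s - ((1697 : ℝ)/1024))^11 ≤ ((69 : ℝ)/1024)^11 := by gcongr
      _ = ((168787390185178426269 : ℝ)/1298074214633706907132624082305024) := by norm_num
  have hl11 : (0:ℝ) ≤ (s - ((1697 : ℝ)/1024))^11 := by positivity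
  have hu12 : (s - ((1697 : ℝ)/1024))^12 ≤ ((11646329922777311412561 : ℝ)/1329227995784915872903807060280344576) := by
    calc (s - ((1697 : ℝ)/1024))^12 ≤ ((69 : ℝ)/1024)^12 := by gcongr
      _ = ((11646329922777311412561 : ℝ)/1329227995784915872903807060280344576) := by norm_num
  have hl12 : (0:ℝ) ≤ (s - ((1697 : ℝ)/1024))^12 := by positivity
  have hu13 : (s - ((1697 : ℝ)/1024))^13 ≤ ((803596764671634487466709 : ℝ)/1361129467683753853853498429727072845824) := by
    calc (s - ((1697 : ℝ)/1024))^13 ≤ ((69 : ℝ)/1024)^13 := by gcongr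
      _ = ((803596764671634487466709 : ℝ)/1361129467683753853853498429727072845824) := by norm_num
  have hl13 : (0:ℝ) ≤ (s - ((1697 : ℝ)/1024))^13 := by positivity
  have hu14 : (s - ((1697 : ℝ)/1024))^14 ≤ ((55448176762342779635202921 : ℝ)/1393796574908163946345982392040522594123776) := by
    calc (s - ((1697 : ℝ)/1024))^14 ≤ ((69 : ℝ)/1024)^14 := by gcongr
      _ = ((55448176762342779635202921 : ℝ)/1393796574908163946345982392040522594123776) := by norm_num
  have hl14 : (0:ℝ) ≤ (s - ((1697 : ℝ)/1024))^14 := by positivity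
  have hu15 : (s - ((1697 : ℝ)/1024))^15 ≤ ((3825924196601651794829001549 : ℝ)/1427247692705959881058285969449495136382746624) := by
    calc (s - ((1697 : ℝ)/1024))^15 ≤ ((69 : ℝ)/1024)^15 := by gcongr
      _ = ((3825924196601651794829001549 : ℝ)/1427247692705959881058285969449495136382746624) := by norm_num
  have hl15 : (0:ℝ) ≤ (s - ((1697 : ℝ)/1024))^15 := by positivity
  have hu16 : (s - ((1697 : ℝ)/1024))^16 ≤ ((263988769565513973843201106881 : ℝ)/1461501637330902918203684832716283019655932542976) := by
    calc (s - ((1697 : ℝ)/1024))^16 ≤ ((69 : ℝ)/1024)^16 := by gcongr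
      _ = ((263988769565513973843201106881 : ℝ)/1461501637330902918203684832716283019655932542976) := by norm_num
  have hl16 : (0:ℝ) ≤ (s - ((1697 : ℝ)/1024))^16 := by positivity
  have hu17 : (s - ((1697 : ℝ)/1024))^17 ≤ ((18215225100020464195180876374789 : ℝ)/1496577676626844588240573268701473812127674924007424) := by
    calc (s - ((1697 : ℝ)/1024))^17 ≤ ((69 : ℝ)/1024)^17 := by gcongr
      _ = ((18215225100020464195180876374789 : ℝ)/1496577676626844588240573268701473812127674924007424) := by norm_num
  have hl17 : (0:ℝ) ≤ (s - ((1697 : ℝ)/1024))^17 := by positivity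
  have hid : Ppoly s = ((1650011033887694045864271345782696392176130569778804636419871838369 : ℝ)/2870071693948769581631721395025933466234780657045757143490022604800) + ((212264779424721597544412254807654124804927602567505427608627729 : ℝ)/2802804388621845294562227924830013150619902985396247210439475200) * (s - ((1697 : ℝ)/1024)) + ((-70356063573650384573894465995304504314044642849068192309903 : ℝ)/342139207595440099433865713480226214675281126147002833305600) * (s - ((1697 : ℝ)/1024))^2 + ((-1394390098099588742605933011044605739292967516912302059 : ℝ)/334120319917421972103384485820533412768829224752932454400) * (s - ((1697 : ℝ)/1024))^3 + ((259954544560812727962570974437048547634100054241329 : ℝ)/18645107138248993978983509253377980623260559417016320) * (s - ((1697 : ℝ)/1024))^4 + ((6186810838621334307565016345279096641379322461 : ℝ)/91040562198481415913005416276259671012014450278400) * (s - ((1697 : ℝ)/1024))^5 + ((-3563564711824015595051093377228093503255847 : ℝ)/8890679902195450772754435183228483497267036160) * (s - ((1697 : ℝ)/1024))^6 + ((-7729347417508907329175521160802493069 : ℝ)/60776132143914214266876021760350961407098880) * (s - ((1697 : ℝ)/1024))^7 + ((7573271475528052413959629349505262939 : ℝ)/1187033830935824497399922300006854714982400) * (s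 - ((1697 : ℝ)/1024))^8 + ((-2067633231108302486967502347137 : ℝ)/231842545104653222148422324220088811520) * (s - ((1697 : ℝ)/1024))^9 + ((-3652137814940068657297762349 : ℝ)/56602183863440728063579668999045120) * (s - ((1697 : ℝ)/1024))^10 + ((5617897631472876371357 : ℝ)/39482550127958097142563943219200) * (s - ((1697 : ℝ)/1024))^11 + ((35014543947686994301 : ℝ)/77114355718668158481570201600) * (s - ((1697 : ℝ)/1024))^12 + ((-23069210245931 : ℝ)/75306988006511873517158400) * (s - ((1697 : ℝ)/1024))^13 + ((-21819841027 : ℝ)/10295877266515295207424) * (s - ((1697 : ℝ)/1024))^14 + ((11208017 : ℝ)/251364191077033574400) * (s - ((1697 : ℝ)/1024))^15 + ((28849 : ℝ)/1963782742789324800) * (s - ((1697 : ℝ)/1024))^16 + ((1 : ℝ)/1917756584755200) * (s - ((1697 : ℝ)/1024))^17 := by unfold Ppoly; ring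
  rw [hid, abs_le]
  constructor <;> linarith [hx0, hx1, hu2, hl2, hu3, hl3, hu4, hl4, hu5, hl5, hu6, hl6, hu7, hl7, hu8, hl8, hu9, hl9, hu10, hl10, hu11, hl11, hu12, hl12, hu13, hl13, hu14, hl14, hu15, hl15, hu16, hl16, hu17, hl17]

lemma ival5 (s : ℝ) (h1 : ((883 : ℝ)/512) ≤ s) (h2 : s ≤ ((913 : ℝ)/512)) : |Ppoly s| ≤ ((581889 : ℝ)/1000000) := by
  have hx0 : (0:ℝ) ≤ s - ((883 : ℝ)/512) := by linarith
  have hx1 : s - ((883 : ℝ)/512) ≤ ((15 : ℝ)/256) := by linarith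
  have hu2 : (s - ((883 : ℝ)/512))^2 ≤ ((225 : ℝ)/65536) := by
    calc (s - ((883 : ℝ)/512))^2 ≤ ((15 : ℝ)/256)^2 := by gcongr
      _ = ((225 : ℝ)/65536) := by norm_num
  have hl2 : (0:ℝ) ≤ (s - ((883 : ℝ)/512))^2 := by positivity
  have hu3 : (s - ((883 : ℝ)/512))^3 ≤ ((3375 : ℝ)/16777216) := by
    calc (s - ((883 : ℝ)/512))^3 ≤ ((15 : ℝ)/256)^3 := by gcongr
      _ = ((3375 : ℝ)/16777216) := by norm_num
  have hl3 : (0:ℝ) ≤ (s - ((883 : ℝ)/512))^3 := by positivity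
  have hu4 : (s - ((883 : ℝ)/512))^4 ≤ ((50625 : ℝ)/4294967296) := by
    calc (s - ((883 : ℝ)/512))^4 ≤ ((15 : ℝ)/256)^4 := by gcongr
      _ = ((50625 : ℝ)/4294967296) := by norm_num
  have hl4 : (0:ℝ) ≤ (s - ((883 : ℝ)/512))^4 := by positivity
  have hu5 : (s - ((883 : ℝ)/512))^5 ≤ ((759375 : ℝ)/1099511627776) := by
    calc (s - ((883 : ℝ)/512))^5 ≤ ((15 : ℝ)/256)^5 := by gcongr
      _ = ((759375 : ℝ)/1099511627776) := by norm_num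
  have hl5 : (0:ℝ) ≤ (s - ((883 : ℝ)/512))^5 := by positivity
  have hu6 : (s - ((883 : ℝ)/512))^6 ≤ ((11390625 : ℝ)/281474976710656) := by
    calc (s - ((883 : ℝ)/512))^6 ≤ ((15 : ℝ)/256)^6 := by gcongr
      _ = ((11390625 : ℝ)/281474976710656) := by norm_num
  have hl6 : (0:ℝ) ≤ (s - ((883 : ℝ)/512))^6 := by positivity
  have hu7 : (s - ((883 : ℝ)/512))^7 ≤ ((170859375 : ℝ)/72057594037927936) := by
    calc (s - ((883 : ℝ)/512))^7 ≤ ((15 : ℝ)/256)^7 := by gcongr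
      _ = ((170859375 : ℝ)/72057594037927936) := by norm_num
  have hl7 : (0:ℝ) ≤ (s - ((883 : ℝ)/512))^7 := by positivity
  have hu8 : (s - ((883 : ℝ)/512))^8 ≤ ((2562890625 : ℝ)/18446744073709551616) := by
    calc (s - ((883 : ℝ)/512))^8 ≤ ((15 : ℝ)/256)^8 := by gcongr
      _ = ((2562890625 : ℝ)/18446744073709551616) := by norm_num
  have hl8 : (0:ℝ) ≤ (s - ((883 : ℝ)/512))^8 := by positivity
  have hu9 : (s - ((883 : ℝ)/512))^9 ≤ ((38443359375 : ℝ)/4722366482869645213696) := by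
    calc (s - ((883 : ℝ)/512))^9 ≤ ((15 : ℝ)/256)^9 := by gcongr
      _ = ((38443359375 : ℝ)/4722366482869645213696) := by norm_num
  have hl9 : (0:ℝ) ≤ (s - ((883 : ℝ)/512))^9 := by positivity
  have hu10 : (s - ((883 : ℝ)/512))^10 ≤ ((576650390625 : ℝ)/1208925819614629174706176) := by
    calc (s - ((883 : ℝ)/512))^10 ≤ ((15 : ℝ)/256)^10 := by gcongr
      _ = ((576650390625 : ℝ)/1208925819614629174706176) := by norm_num
  have hl10 : (0:ℝ) ≤ (s - ((883 : ℝ)/512))^10 := by positivity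
  have hu11 : (s - ((883 : ℝ)/512))^11 ≤ ((8649755859375 : ℝ)/309485009821345068724781056) := by
    calc (s - ((883 : ℝ)/512))^11 ≤ ((15 : ℝ)/256)^11 := by gcongr
      _ = ((8649755859375 : ℝ)/309485009821345068724781056) := by norm_num
  have hl11 : (0:ℝ) ≤ (s - ((883 : ℝ)/512))^11 := by positivity
  have hu12 : (s - ((883 : ℝ)/512))^12 ≤ ((129746337890625 : ℝ)/79228162514264337593543950336) := by
    calc (s - ((883 : ℝ)/512))^12 ≤ ((15 : ℝ)/256)^12 := by gcongr
      _ = ((129746337890625 : ℝ)/79228162514264337593543950336) := by norm_num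
  have hl12 : (0:ℝ) ≤ (s - ((883 : ℝ)/512))^12 := by positivity
  have hu13 : (s - ((883 : ℝ)/512))^13 ≤ ((1946195068359375 : ℝ)/20282409603651670423947251286016) := by
    calc (s - ((883 : ℝ)/512))^13 ≤ ((15 : ℝ)/256)^13 := by gcongr
      _ = ((1946195068359375 : ℝ)/20282409603651670423947251286016) := by norm_num
  have hl13 : (0:ℝ) ≤ (s - ((883 : ℝ)/512))^13 := by positivity
  have hu14 : (s - ((883 : ℝ)/512))^14 ≤ ((29192926025390625 : ℝ)/5192296858534827628530496329220096) := by
    calc (s - ((883 : ℝ)/512))^14 ≤ ((15 : ℝ)/256)^14 := by gcongr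
      _ = ((29192926025390625 : ℝ)/5192296858534827628530496329220096) := by norm_num
  have hl14 : (0:ℝ) ≤ (s - ((883 : ℝ)/512))^14 := by positivity
  have hu15 : (s - ((883 : ℝ)/512))^15 ≤ ((437893890380859375 : ℝ)/1329227995784915872903807060280344576) := by
    calc (s - ((883 : ℝ)/512))^15 ≤ ((15 : ℝ)/256)^15 := by gcongr
      _ = ((437893890380859375 : ℝ)/1329227995784915872903807060280344576) := by norm_num
  have hl15 : (0:ℝ) ≤ (s - ((883 : ℝ)/512))^15 := by positivity
  have hu16 : (s - ((883 : ℝ)/512))^16 ≤ ((6568408355712890625 : ℝ)/340282366920938463463374607431768211456) := by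
    calc (s - ((883 : ℝ)/512))^16 ≤ ((15 : ℝ)/256)^16 := by gcongr
      _ = ((6568408355712890625 : ℝ)/340282366920938463463374607431768211456) := by norm_num
  have hl16 : (0:ℝ) ≤ (s - ((883 : ℝ)/512))^16 := by positivity
  have hu17 : (s - ((883 : ℝ)/512))^17 ≤ ((98526125335693359375 : ℝ)/87112285931760246646623899502532662132736) := by
    calc (s - ((883 : ℝ)/512))^17 ≤ ((15 : ℝ)/256)^17 := by gcongr
      _ = ((98526125335693359375 : ℝ)/87112285931760246646623899502532662132736) := by norm_num
  have hl17 : (0:ℝ) ≤ (s - ((883 : ℝ)/512))^17 := by positivity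
  have hid : Ppoly s = ((1811408715889251911157749988102903910152812238123275894159221 : ℝ)/3128129898015452337681057951819211105602570296201168761651200) + ((2052004844173897884856861747928639963862687155994182537297 : ℝ)/42767400949430012429233214185028276834410140768375354163200) * (s - ((883 : ℝ)/512)) + ((-2151938507549173976653691417933721359111458884994411477 : ℝ)/10441259997419436628230765181891669149025913273529139200) * (s - ((883 : ℝ)/512))^2 + ((-8459352885445340535676846935469066405657133832179 : ℝ)/20393085932459837164513213245882166306691236862361600) * (s - ((883 : ℝ)/512))^3 + ((31722729099218940863230385913391341613241509811 : ℝ)/2276014054962035397825135406906491775300361256960) * (s - ((883 : ℝ)/512))^4 + ((-2089234293034059516255192899705720024138803 : ℝ)/22226699755488626931886087958071208743167590400) * (s - ((883 : ℝ)/512))^5 + ((-1240545231496831845047261339081712807799 : ℝ)/3100823068567051748310001110221987826892800) * (s - ((883 : ℝ)/512))^6 + ((28049730365636081431403067331759709 : ℝ)/8478813078113032124285159285763247964160) * (s - ((883 : ℝ)/512))^7 + ((14748469637129543374262576019960161 : ℝ)/2318425451046532221484223242200888115200) * (s - ((883 : ℝ)/512))^8 + ((-47391454662960172037671733921 : ℝ)/905634941815051649017274703984721920)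 * (s - ((883 : ℝ)/512))^9 + ((-28425550643306604895226911 : ℝ)/442204561433130687996716164055040) * (s - ((883 : ℝ)/512))^10 + ((314068281612798374069 : ℝ)/616914845749345267852561612800) * (s - ((883 : ℝ)/512))^11 + ((1091463987413680439 : ℝ)/2409823616208379952549068800) * (s - ((883 : ℝ)/512))^12 + ((-1534230378893 : ℝ)/672383821486713156403200) * (s - ((883 : ℝ)/512))^13 + ((-1899312691 : ℝ)/919274755938865643520) * (s - ((883 : ℝ)/512))^14 + ((3817529 : ℝ)/62841047769258393600) * (s - ((883 : ℝ)/512))^15 + ((15011 : ℝ)/981891371394662400) * (s - ((883 : ℝ)/512))^16 + ((1 : ℝ)/1917756584755200) * (s - ((883 : ℝ)/512))^17 := by unfold Ppoly; ring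
  rw [hid, abs_le]
  constructor <;> linarith [hx0, hx1, hu2, hl2, hu3, hl3, hu4, hl4, hu5, hl5, hu6, hl6, hu7, hl7, hu8, hl8, hu9, hl9, hu10, hl10, hu11, hl11, hu12, hl12, hu13, hl13, hu14, hl14, hu15, hl15, hu16, hl16, hu17, hl17]

lemma ival6 (s : ℝ) (h1 : ((913 : ℝ)/512) ≤ s) (h2 : s ≤ ((463 : ℝ)/256)) : |Ppoly s| ≤ ((581889 : ℝ)/1000000) := by
  have hx0 : (0:ℝ) ≤ s - ((913 : ℝ)/512) := by linarith
  have hx1 : s - ((913 : ℝ)/512) ≤ ((13 : ℝ)/512) := by linarith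
  have hu2 : (s - ((913 : ℝ)/512))^2 ≤ ((169 : ℝ)/262144) := by
    calc (s - ((913 : ℝ)/512))^2 ≤ ((13 : ℝ)/512)^2 := by gcongr
      _ = ((169 : ℝ)/262144) := by norm_num
  have hl2 : (0:ℝ) ≤ (s - ((913 : ℝ)/512))^2 := by positivity
  have hu3 : (s - ((913 : ℝ)/512))^3 ≤ ((2197 : ℝ)/134217728) := by
    calc (s - ((913 : ℝ)/512))^3 ≤ ((13 : ℝ)/512)^3 := by gcongr
      _ = ((2197 : ℝ)/134217728) := by norm_num
  have hl3 : (0:ℝ) ≤ (s - ((913 : ℝ)/512))^3 := by positivity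
  have hu4 : (s - ((913 : ℝ)/512))^4 ≤ ((28561 : ℝ)/68719476736) := by
    calc (s - ((913 : ℝ)/512))^4 ≤ ((13 : ℝ)/512)^4 := by gcongr
      _ = ((28561 : ℝ)/68719476736) := by norm_num
  have hl4 : (0:ℝ) ≤ (s - ((913 : ℝ)/512))^4 := by positivity
  have hu5 : (s - ((913 : ℝ)/512))^5 ≤ ((371293 : ℝ)/35184372088832) := by
    calc (s - ((913 : ℝ)/512))^5 ≤ ((13 : ℝ)/512)^5 := by gcongr
      _ = ((371293 : ℝ)/35184372088832) := by norm_num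
  have hl5 : (0:ℝ) ≤ (s - ((913 : ℝ)/512))^5 := by positivity
  have hu6 : (s - ((913 : ℝ)/512))^6 ≤ ((4826809 : ℝ)/18014398509481984) := by
    calc (s - ((913 : ℝ)/512))^6 ≤ ((13 : ℝ)/512)^6 := by gcongr
      _ = ((4826809 : ℝ)/18014398509481984) := by norm_num
  have hl6 : (0:ℝ) ≤ (s - ((913 : ℝ)/512))^6 := by positivity
  have hu7 : (s - ((913 : ℝ)/512))^7 ≤ ((62748517 : ℝ)/9223372036854775808) := by
    calc (s - ((913 : ℝ)/512))^7 ≤ ((13 : ℝ)/512)^7 := by gcongr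
      _ = ((62748517 : ℝ)/9223372036854775808) := by norm_num
  have hl7 : (0:ℝ) ≤ (s - ((913 : ℝ)/512))^7 := by positivity
  have hu8 : (s - ((913 : ℝ)/512))^8 ≤ ((815730721 : ℝ)/4722366482869645213696) := by
    calc (s - ((913 : ℝ)/512))^8 ≤ ((13 : ℝ)/512)^8 := by gcongr
      _ = ((815730721 : ℝ)/4722366482869645213696) := by norm_num
  have hl8 : (0:ℝ) ≤ (s - ((913 : ℝ)/512))^8 := by positivity
  have hu9 : (s - ((913 : ℝ)/512))^9 ≤ ((10604499373 : ℝ)/2417851639229258349412352) := by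
    calc (s - ((913 : ℝ)/512))^9 ≤ ((13 : ℝ)/512)^9 := by gcongr
      _ = ((10604499373 : ℝ)/2417851639229258349412352) := by norm_num
  have hl9 : (0:ℝ) ≤ (s - ((913 : ℝ)/512))^9 := by positivity
  have hu10 : (s - ((913 : ℝ)/512))^10 ≤ ((137858491849 : ℝ)/1237940039285380274899124224) := by
    calc (s - ((913 : ℝ)/512))^10 ≤ ((13 : ℝ)/512)^10 := by gcongr
      _ = ((137858491849 : ℝ)/1237940039285380274899124224) := by norm_num
  have hl10 : (0:ℝ) ≤ (s - ((913 : ℝ)/512))^10 := by positivity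
  have hu11 : (s - ((913 : ℝ)/512))^11 ≤ ((1792160394037 : ℝ)/633825300114114700748351602688) := by
    calc (s - ((913 : ℝ)/512))^11 ≤ ((13 : ℝ)/512)^11 := by gcongr
      _ = ((1792160394037 : ℝ)/633825300114114700748351602688) := by norm_num
  have hl11 : (0:ℝ) ≤ (s - ((913 : ℝ)/512))^11 := by positivity
  have hu12 : (s - ((913 : ℝ)/512))^12 ≤ ((23298085122481 : ℝ)/324518553658426726783156020576256) := by
    calc (s - ((913 : ℝ)/512))^12 ≤ ((13 : ℝ)/512)^12 := by gcongr
      _ = ((23298085122481 : ℝ)/324518553658426726783156020576256) := by norm_num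
  have hl12 : (0:ℝ) ≤ (s - ((913 : ℝ)/512))^12 := by positivity
  have hu13 : (s - ((913 : ℝ)/512))^13 ≤ ((302875106592253 : ℝ)/166153499473114484112975882535043072) := by
    calc (s - ((913 : ℝ)/512))^13 ≤ ((13 : ℝ)/512)^13 := by gcongr
      _ = ((302875106592253 : ℝ)/166153499473114484112975882535043072) := by norm_num
  have hl13 : (0:ℝ) ≤ (s - ((913 : ℝ)/512))^13 := by positivity
  have hu14 : (s - ((913 : ℝ)/512))^14 ≤ ((3937376385699289 : ℝ)/85070591730234615865843651857942052864) := by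
    calc (s - ((913 : ℝ)/512))^14 ≤ ((13 : ℝ)/512)^14 := by gcongr
      _ = ((3937376385699289 : ℝ)/85070591730234615865843651857942052864) := by norm_num
  have hl14 : (0:ℝ) ≤ (s - ((913 : ℝ)/512))^14 := by positivity
  have hu15 : (s - ((913 : ℝ)/512))^15 ≤ ((51185893014090757 : ℝ)/43556142965880123323311949751266331066368) := by
    calc (s - ((913 : ℝ)/512))^15 ≤ ((13 : ℝ)/512)^15 := by gcongr
      _ = ((51185893014090757 : ℝ)/43556142965880123323311949751266331066368) := by norm_num
  have hl15 : (0:ℝ) ≤ (s - ((913 : ℝ)/512))^15 := by positivity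
  have hu16 : (s - ((913 : ℝ)/512))^16 ≤ ((665416609183179841 : ℝ)/22300745198530623141535718272648361505980416) := by
    calc (s - ((913 : ℝ)/512))^16 ≤ ((13 : ℝ)/512)^16 := by gcongr
      _ = ((665416609183179841 : ℝ)/22300745198530623141535718272648361505980416) := by norm_num
  have hl16 : (0:ℝ) ≤ (s - ((913 : ℝ)/512))^16 := by positivity
  have hu17 : (s - ((913 : ℝ)/512))^17 ≤ ((8650415919381337933 : ℝ)/11417981541647679048466287755595961091061972992) := by
    calc (s - ((913 : ℝ)/512))^17 ≤ ((13 : ℝ)/512)^17 := by gcongr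
      _ = ((8650415919381337933 : ℝ)/11417981541647679048466287755595961091061972992) := by norm_num
  have hl17 : (0:ℝ) ≤ (s - ((913 : ℝ)/512))^17 := by positivity
  have hid : Ppoly s = ((12725928967657050822829219130067876758618341268618022196135057 : ℝ)/21896909286108166363767405662734477739217992073408181331558400) + ((1019370978416390513287435843048269512765405387148925681937 : ℝ)/42767400949430012429233214185028276834410140768375354163200) * (s - ((913 : ℝ)/512)) + ((-2149704763717805540483830645963771685094239899138153087 : ℝ)/10441259997419436628230765181891669149025913273529139200) * (s - ((913 : ℝ)/512))^2 + ((58059775361632457647764452833110235573777885386421 : ℝ)/20393085932459837164513213245882166306691236862361600) * (s - ((913 : ℝ)/512))^3 + ((31613224409321268768448775469151202581360263521 : ℝ)/2276014054962035397825135406906491775300361256960) * (s - ((913 : ℝ)/512))^4 + ((-744073716928707061947117695088090554550469 : ℝ)/3175242822212660990269441136867315534738227200) * (s - ((913 : ℝ)/512))^5 + ((-8641113424270728421839110369561204920243 : ℝ)/21705761479969362238170007771553914788249600) * (s - ((913 : ℝ)/512))^6 + ((74570782172500331634507632288939959 : ℝ)/11870338309358244973999223000068547149824) * (s - ((913 :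 ℝ)/512))^7 + ((14661511775623613181617366319616811 : ℝ)/2318425451046532221484223242200888115200) * (s - ((913 : ℝ)/512))^8 + ((-81396922469446123765826072321 : ℝ)/905634941815051649017274703984721920) * (s - ((913 : ℝ)/512))^9 + ((-28235136798462464628658813 : ℝ)/442204561433130687996716164055040) * (s - ((913 : ℝ)/512))^10 + ((510062138309195052989 : ℝ)/616914845749345267852561612800) * (s - ((913 : ℝ)/512))^11 + ((155104885230230507 : ℝ)/344260516601197136078438400) * (s - ((913 : ℝ)/512))^12 + ((-18605477881451 : ℝ)/4706686750406992094822400) * (s - ((913 : ℝ)/512))^13 + ((-12910622527 : ℝ)/6434923291572059504640) * (s - ((913 : ℝ)/512))^14 + ((4733489 : ℝ)/62841047769258393600) * (s - ((913 : ℝ)/512))^15 + ((15521 : ℝ)/981891371394662400) * (s - ((913 : ℝ)/512))^16 + ((1 : ℝ)/1917756584755200) * (s - ((913 : ℝ)/512))^17 := by unfold Ppoly; ring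
  rw [hid, abs_le]
  constructor <;> linarith [hx0, hx1, hu2, hl2, hu3, hl3, hu4, hl4, hu5, hl5, hu6, hl6, hu7, hl7, hu8, hl8, hu9, hl9, hu10, hl10, hu11, hl11, hu12, hl12, hu13, hl13, hu14, hl14, hu15, hl15, hu16, hl16, hu17, hl17]

lemma ival7 (s : ℝ) (h1 : ((463 : ℝ)/256) ≤ s) (h2 : s ≤ ((233 : ℝ)/128)) : |Ppoly s| ≤ ((581889 : ℝ)/1000000) := by
  have hx0 : (0:ℝ) ≤ s - ((463 : ℝ)/256) := by linarith
  have hx1 : s - ((463 : ℝ)/256) ≤ ((3 : ℝ)/256) := by linarith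
  have hu2 : (s - ((463 : ℝ)/256))^2 ≤ ((9 : ℝ)/65536) := by
    calc (s - ((463 : ℝ)/256))^2 ≤ ((3 : ℝ)/256)^2 := by gcongr
      _ = ((9 : ℝ)/65536) := by norm_num
  have hl2 : (0:ℝ) ≤ (s - ((463 : ℝ)/256))^2 := by positivity
  have hu3 : (s - ((463 : ℝ)/256))^3 ≤ ((27 : ℝ)/16777216) := by
    calc (s - ((463 : ℝ)/256))^3 ≤ ((3 : ℝ)/256)^3 := by gcongr
      _ = ((27 : ℝ)/16777216) := by norm_num
  have hl3 : (0:ℝ) ≤ (s - ((463 : ℝ)/256))^3 := by positivity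
  have hu4 : (s - ((463 : ℝ)/256))^4 ≤ ((81 : ℝ)/4294967296) := by
    calc (s - ((463 : ℝ)/256))^4 ≤ ((3 : ℝ)/256)^4 := by gcongr
      _ = ((81 : ℝ)/4294967296) := by norm_num
  have hl4 : (0:ℝ) ≤ (s - ((463 : ℝ)/256))^4 := by positivity
  have hu5 : (s - ((463 : ℝ)/256))^5 ≤ ((243 : ℝ)/1099511627776) := by
    calc (s - ((463 : ℝ)/256))^5 ≤ ((3 : ℝ)/256)^5 := by gcongr
      _ = ((243 : ℝ)/1099511627776) := by norm_num
  have hl5 : (0:ℝ) ≤ (s - ((463 : ℝ)/256))^5 := by positivity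
  have hu6 : (s - ((463 : ℝ)/256))^6 ≤ ((729 : ℝ)/281474976710656) := by
    calc (s - ((463 : ℝ)/256))^6 ≤ ((3 : ℝ)/256)^6 := by gcongr
      _ = ((729 : ℝ)/281474976710656) := by norm_num
  have hl6 : (0:ℝ) ≤ (s - ((463 : ℝ)/256))^6 := by positivity
  have hu7 : (s - ((463 : ℝ)/256))^7 ≤ ((2187 : ℝ)/72057594037927936) := by
    calc (s - ((463 : ℝ)/256))^7 ≤ ((3 : ℝ)/256)^7 := by gcongr
      _ = ((2187 : ℝ)/72057594037927936) := by norm_num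
  have hl7 : (0:ℝ) ≤ (s - ((463 : ℝ)/256))^7 := by positivity
  have hu8 : (s - ((463 : ℝ)/256))^8 ≤ ((6561 : ℝ)/18446744073709551616) := by
    calc (s - ((463 : ℝ)/256))^8 ≤ ((3 : ℝ)/256)^8 := by gcongr
      _ = ((6561 : ℝ)/18446744073709551616) := by norm_num
  have hl8 : (0:ℝ) ≤ (s - ((463 : ℝ)/256))^8 := by positivity
  have hu9 : (s - ((463 : ℝ)/256))^9 ≤ ((19683 : ℝ)/4722366482869645213696) := by
    calc (s - ((463 : ℝ)/256))^9 ≤ ((3 : ℝ)/256)^9 := by gcongr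
      _ = ((19683 : ℝ)/4722366482869645213696) := by norm_num
  have hl9 : (0:ℝ) ≤ (s - ((463 : ℝ)/256))^9 := by positivity
  have hu10 : (s - ((463 : ℝ)/256))^10 ≤ ((59049 : ℝ)/1208925819614629174706176) := by
    calc (s - ((463 : ℝ)/256))^10 ≤ ((3 : ℝ)/256)^10 := by gcongr
      _ = ((59049 : ℝ)/1208925819614629174706176) := by norm_num
  have hl10 : (0:ℝ) ≤ (s - ((463 : ℝ)/256))^10 := by positivity
  have hu11 : (s - ((463 : ℝ)/256))^11 ≤ ((177147 : ℝ)/309485009821345068724781056) := by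
    calc (s - ((463 : ℝ)/256))^11 ≤ ((3 : ℝ)/256)^11 := by gcongr
      _ = ((177147 : ℝ)/309485009821345068724781056) := by norm_num
  have hl11 : (0:ℝ) ≤ (s - ((463 : ℝ)/256))^11 := by positivity
  have hu12 : (s - ((463 : ℝ)/256))^12 ≤ ((531441 : ℝ)/79228162514264337593543950336) := by
    calc (s - ((463 : ℝ)/256))^12 ≤ ((3 : ℝ)/256)^12 := by gcongr
      _ = ((531441 : ℝ)/79228162514264337593543950336) := by norm_num
  have hl12 : (0:ℝ) ≤ (s - ((463 : ℝ)/256))^12 := by positivity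
  have hu13 : (s - ((463 : ℝ)/256))^13 ≤ ((1594323 : ℝ)/20282409603651670423947251286016) := by
    calc (s - ((463 : ℝ)/256))^13 ≤ ((3 : ℝ)/256)^13 := by gcongr
      _ = ((1594323 : ℝ)/20282409603651670423947251286016) := by norm_num
  have hl13 : (0:ℝ) ≤ (s - ((463 : ℝ)/256))^13 := by positivity
  have hu14 : (s - ((463 : ℝ)/256))^14 ≤ ((4782969 : ℝ)/5192296858534827628530496329220096) := by
    calc (s - ((463 : ℝ)/256))^14 ≤ ((3 : ℝ)/256)^14 := by gcongr
      _ = ((4782969 : ℝ)/5192296858534827628530496329220096) := by norm_num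
  have hl14 : (0:ℝ) ≤ (s - ((463 : ℝ)/256))^14 := by positivity
  have hu15 : (s - ((463 : ℝ)/256))^15 ≤ ((14348907 : ℝ)/1329227995784915872903807060280344576) := by
    calc (s - ((463 : ℝ)/256))^15 ≤ ((3 : ℝ)/256)^15 := by gcongr
      _ = ((14348907 : ℝ)/1329227995784915872903807060280344576) := by norm_num
  have hl15 : (0:ℝ) ≤ (s - ((463 : ℝ)/256))^15 := by positivity
  have hu16 : (s - ((463 : ℝ)/256))^16 ≤ ((43046721 : ℝ)/340282366920938463463374607431768211456) := by
    calc (s - ((463 : ℝ)/256))^16 ≤ ((3 : ℝ)/256)^16 := by gcongr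
      _ = ((43046721 : ℝ)/340282366920938463463374607431768211456) := by norm_num
  have hl16 : (0:ℝ) ≤ (s - ((463 : ℝ)/256))^16 := by positivity
  have hu17 : (s - ((463 : ℝ)/256))^17 ≤ ((129140163 : ℝ)/87112285931760246646623899502532662132736) := by
    calc (s - ((463 : ℝ)/256))^17 ≤ ((3 : ℝ)/256)^17 := by gcongr
      _ = ((129140163 : ℝ)/87112285931760246646623899502532662132736) := by norm_num
  have hl17 : (0:ℝ) ≤ (s - ((463 : ℝ)/256))^17 := by positivity
  have hid : Ppoly s = ((97170070925482085972371442411227169504453058858169521871 : ℝ)/167060159958710986051692242910266706384414612376466227200) + ((8735759742588053443867036714194639233175255134030609 : ℝ)/652578749838714789264422823868229321814119579595571200) * (s - ((463 : ℝ)/256)) + ((-65517574530616602380874532609199447132162323251937 : ℝ)/318641967694684955695518956966908848542050575974400) * (s - ((463 : ℝ)/256))^2 + ((5297506427487619373440435217477197842217337461 : ℝ)/1244695186307363108185620925651987689617385062400) * (s - ((463 : ℝ)/256))^3 + ((3849702175553739451633481694137004073276031 : ℝ)/277833746943607836648576099475890109289594880) * (s - ((463 : ℝ)/256))^4 + ((-1600222316010827132755210019775058295779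 : ℝ)/5426440369992340559542501942888478697062400) * (s - ((463 : ℝ)/256))^5 + ((-841250285926153501553016946044915593 : ℝ)/2119703269528258031071289821440811991040) * (s - ((463 : ℝ)/256))^6 + ((438439971112253662829699004354899 : ℝ)/57960636276163305537105581055022202880) * (s - ((463 : ℝ)/256))^7 + ((28534385553989753171822919707381 : ℝ)/4528174709075258245086373519923609600) * (s - ((463 : ℝ)/256))^8 + ((-375199904577408254319010817 : ℝ)/3537636491465045503973729312440320) * (s - ((463 : ℝ)/256))^9 + ((-43944615178708324717703 : ℝ)/690944627239266699994869006336) * (s - ((463 : ℝ)/256))^10 + ((9290928577306601597 : ℝ)/9639294464833519810196275200) * (s - ((463 : ℝ)/256))^11 + ((33822112665649139 : ℝ)/75306988006511873517158400) * (s - ((463 : ℝ)/256))^12 + ((-1371097283051 : ℝ)/294167921900437005926400) * (s - ((463 : ℝ)/256))^13 + ((-317952749 : ℝ)/160873082289301487616) * (s - ((463 : ℝ)/256))^14 + ((1284977 : ℝ)/15710261942314598400) * (s - ((463 : ℝ)/256))^15 + ((7871 : ℝ)/490945685697331200) * (s - ((463 : ℝ)/256))^16 + ((1 : ℝ)/1917756584755200)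 * (s - ((463 : ℝ)/256))^17 := by unfold Ppoly; ring
  rw [hid, abs_le]
  constructor <;> linarith [hx0, hx1, hu2, hl2, hu3, hl3, hu4, hl4, hu5, hl5, hu6, hl6, hu7, hl7, hu8, hl8, hu9, hl9, hu10, hl10, hu11, hl11, hu12, hl12, hu13, hl13, hu14, hl14, hu15, hl15, hu16, hl16, hu17, hl17]

lemma ival8 (s : ℝ) (h1 : ((233 : ℝ)/128) ≤ s) (h2 : s ≤ ((469 : ℝ)/256)) : |Ppoly s| ≤ ((581889 : ℝ)/1000000) := by
  have hx0 : (0:ℝ) ≤ s - ((233 : ℝ)/128) := by linarith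
  have hx1 : s - ((233 : ℝ)/128) ≤ ((3 : ℝ)/256) := by linarith
  have hu2 : (s - ((233 : ℝ)/128))^2 ≤ ((9 : ℝ)/65536) := by
    calc (s - ((233 : ℝ)/128))^2 ≤ ((3 : ℝ)/256)^2 := by gcongr
      _ = ((9 : ℝ)/65536) := by norm_num
  have hl2 : (0:ℝ) ≤ (s - ((233 : ℝ)/128))^2 := by positivity
  have hu3 : (s - ((233 : ℝ)/128))^3 ≤ ((27 : ℝ)/16777216) := by
    calc (s - ((233 : ℝ)/128))^3 ≤ ((3 : ℝ)/256)^3 := by gcongr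
      _ = ((27 : ℝ)/16777216) := by norm_num
  have hl3 : (0:ℝ) ≤ (s - ((233 : ℝ)/128))^3 := by positivity
  have hu4 : (s - ((233 : ℝ)/128))^4 ≤ ((81 : ℝ)/4294967296) := by
    calc (s - ((233 : ℝ)/128))^4 ≤ ((3 : ℝ)/256)^4 := by gcongr
      _ = ((81 : ℝ)/4294967296) := by norm_num
  have hl4 : (0:ℝ) ≤ (s - ((233 : ℝ)/128))^4 := by positivity
  have hu5 : (s - ((233 : ℝ)/128))^5 ≤ ((243 : ℝ)/1099511627776) := by
    calc (s - ((233 : ℝ)/128))^5 ≤ ((3 : ℝ)/256)^5 := by gcongr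
      _ = ((243 : ℝ)/1099511627776) := by norm_num
  have hl5 : (0:ℝ) ≤ (s - ((233 : ℝ)/128))^5 := by positivity
  have hu6 : (s - ((233 : ℝ)/128))^6 ≤ ((729 : ℝ)/281474976710656) := by
    calc (s - ((233 : ℝ)/128))^6 ≤ ((3 : ℝ)/256)^6 := by gcongr
      _ = ((729 : ℝ)/281474976710656) := by norm_num
  have hl6 : (0:ℝ) ≤ (s - ((233 : ℝ)/128))^6 := by positivity
  have hu7 : (s - ((233 : ℝ)/128))^7 ≤ ((2187 : ℝ)/72057594037927936) := by
    calc (s - ((233 : ℝ)/128))^7 ≤ ((3 : ℝ)/256)^7 := by gcongr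
      _ = ((2187 : ℝ)/72057594037927936) := by norm_num
  have hl7 : (0:ℝ) ≤ (s - ((233 : ℝ)/128))^7 := by positivity
  have hu8 : (s - ((233 : ℝ)/128))^8 ≤ ((6561 : ℝ)/18446744073709551616) := by
    calc (s - ((233 : ℝ)/128))^8 ≤ ((3 : ℝ)/256)^8 := by gcongr
      _ = ((6561 : ℝ)/18446744073709551616) := by norm_num
  have hl8 : (0:ℝ) ≤ (s - ((233 : ℝ)/128))^8 := by positivity
  have hu9 : (s - ((233 : ℝ)/128))^9 ≤ ((19683 : ℝ)/4722366482869645213696) := by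
    calc (s - ((233 : ℝ)/128))^9 ≤ ((3 : ℝ)/256)^9 := by gcongr
      _ = ((19683 : ℝ)/4722366482869645213696) := by norm_num
  have hl9 : (0:ℝ) ≤ (s - ((233 : ℝ)/128))^9 := by positivity
  have hu10 : (s - ((233 : ℝ)/128))^10 ≤ ((59049 : ℝ)/1208925819614629174706176) := by
    calc (s - ((233 : ℝ)/128))^10 ≤ ((3 : ℝ)/256)^10 := by gcongr
      _ = ((59049 : ℝ)/1208925819614629174706176) := by norm_num
  have hl10 : (0:ℝ) ≤ (s - ((233 : ℝ)/128))^10 := by positivity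
  have hu11 : (s - ((233 : ℝ)/128))^11 ≤ ((177147 : ℝ)/309485009821345068724781056) := by
    calc (s - ((233 : ℝ)/128))^11 ≤ ((3 : ℝ)/256)^11 := by gcongr
      _ = ((177147 : ℝ)/309485009821345068724781056) := by norm_num
  have hl11 : (0:ℝ) ≤ (s - ((233 : ℝ)/128))^11 := by positivity
  have hu12 : (s - ((233 : ℝ)/128))^12 ≤ ((531441 : ℝ)/79228162514264337593543950336) := by
    calc (s - ((233 : ℝ)/128))^12 ≤ ((3 : ℝ)/256)^12 := by gcongr
      _ = ((531441 : ℝ)/79228162514264337593543950336) := by norm_num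
  have hl12 : (0:ℝ) ≤ (s - ((233 : ℝ)/128))^12 := by positivity
  have hu13 : (s - ((233 : ℝ)/128))^13 ≤ ((1594323 : ℝ)/20282409603651670423947251286016) := by
    calc (s - ((233 : ℝ)/128))^13 ≤ ((3 : ℝ)/256)^13 := by gcongr
      _ = ((1594323 : ℝ)/20282409603651670423947251286016) := by norm_num
  have hl13 : (0:ℝ) ≤ (s - ((233 : ℝ)/128))^13 := by positivity
  have hu14 : (s - ((233 : ℝ)/128))^14 ≤ ((4782969 : ℝ)/5192296858534827628530496329220096) := by
    calc (s - ((233 : ℝ)/128))^14 ≤ ((3 : ℝ)/256)^14 := by gcongr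
      _ = ((4782969 : ℝ)/5192296858534827628530496329220096) := by norm_num
  have hl14 : (0:ℝ) ≤ (s - ((233 : ℝ)/128))^14 := by positivity
  have hu15 : (s - ((233 : ℝ)/128))^15 ≤ ((14348907 : ℝ)/1329227995784915872903807060280344576) := by
    calc (s - ((233 : ℝ)/128))^15 ≤ ((3 : ℝ)/256)^15 := by gcongr
      _ = ((14348907 : ℝ)/1329227995784915872903807060280344576) := by norm_num
  have hl15 : (0:ℝ) ≤ (s - ((233 : ℝ)/128))^15 := by positivity
  have hu16 : (s - ((233 : ℝ)/128))^16 ≤ ((43046721 : ℝ)/340282366920938463463374607431768211456) := by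
    calc (s - ((233 : ℝ)/128))^16 ≤ ((3 : ℝ)/256)^16 := by gcongr
      _ = ((43046721 : ℝ)/340282366920938463463374607431768211456) := by norm_num
  have hl16 : (0:ℝ) ≤ (s - ((233 : ℝ)/128))^16 := by positivity
  have hu17 : (s - ((233 : ℝ)/128))^17 ≤ ((129140163 : ℝ)/87112285931760246646623899502532662132736) := by
    calc (s - ((233 : ℝ)/128))^17 ≤ ((3 : ℝ)/256)^17 := by gcongr
      _ = ((129140163 : ℝ)/87112285931760246646623899502532662132736) := by norm_num
  have hl17 : (0:ℝ) ≤ (s - ((233 : ℝ)/128))^17 := by positivity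
  have hid : Ppoly s = ((105930396082468956163155029510577957202059026245391 : ℝ)/182081124396962831826010832552519342024028900556800) + ((85328958366605005496823116352845002250697966737 : ℝ)/9957561490458904865484967405215901516939080499200) * (s - ((233 : ℝ)/128)) + ((-1997871720952949224621285108536357647919325847 : ℝ)/9724181143026274282700163481656153825135820800) * (s - ((233 : ℝ)/128))^2 + ((372645502991082080424801064316304151300741 : ℝ)/75970165179892767833595027200438701758873600) * (s - ((233 : ℝ)/128))^3 + ((469320616664764913183216878138497756121 : ℝ)/33915252312452128497140637143052991856640) * (s - ((233 : ℝ)/128))^4 + ((-427618629970340169338913815808696643 : ℝ)/1324814543455161269419556138400507494400) * (s - ((233 : ℝ)/128))^5 + ((-292928165124068085727437936109469 : ℝ)/739293830053103386952877309375283200) * (s - ((233 : ℝ)/128))^6 + ((65938913369732855205936425861 : ℝ)/8086026266205818294797095571292160) * (s - ((233 : ℝ)/128))^7 + ((55628818335716386516295505331 : ℝ)/8844091228662613759934323281100800) * (s - ((233 : ℝ)/128))^8 + ((-1568517019244799994375361 : ℝ)/13818892544785333999897380126720) * (s - ((233 : ℝ)/128))^9 + ((-342624655154474817025 : ℝ)/5398004900306771093709914112)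 * (s - ((233 : ℝ)/128))^10 + ((154675534538218829 : ℝ)/150613976013023747034316800) * (s - ((233 : ℝ)/128))^11 + ((1055212012493509 : ℝ)/2353343375203496047411200) * (s - ((233 : ℝ)/128))^12 + ((-13090463453 : ℝ)/2626499302682473267200) * (s - ((233 : ℝ)/128))^13 + ((-28178321 : ℝ)/14363668061544775680) * (s - ((233 : ℝ)/128))^14 + ((333089 : ℝ)/3927565485578649600) * (s - ((233 : ℝ)/128))^15 + ((3961 : ℝ)/245472842848665600) * (s - ((233 : ℝ)/128))^16 + ((1 : ℝ)/1917756584755200) * (s - ((233 : ℝ)/128))^17 := by unfold Ppoly; ring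
  rw [hid, abs_le]
  constructor <;> linarith [hx0, hx1, hu2, hl2, hu3, hl3, hu4, hl4, hu5, hl5, hu6, hl6, hu7, hl7, hu8, hl8, hu9, hl9, hu10, hl10, hu11, hl11, hu12, hl12, hu13, hl13, hu14, hl14, hu15, hl15, hu16, hl16, hu17, hl17]

lemma ival9 (s : ℝ) (h1 : ((469 : ℝ)/256) ≤ s) (h2 : s ≤ ((1887 : ℝ)/1024)) : |Ppoly s| ≤ ((581889 : ℝ)/1000000) := by
  have hx0 : (0:ℝ) ≤ s - ((469 : ℝ)/256) := by linarith
  have hx1 : s - ((469 : ℝ)/256) ≤ ((11 : ℝ)/1024) := by linarith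
  have hu2 : (s - ((469 : ℝ)/256))^2 ≤ ((121 : ℝ)/1048576) := by
    calc (s - ((469 : ℝ)/256))^2 ≤ ((11 : ℝ)/1024)^2 := by gcongr
      _ = ((121 : ℝ)/1048576) := by norm_num
  have hl2 : (0:ℝ) ≤ (s - ((469 : ℝ)/256))^2 := by positivity
  have hu3 : (s - ((469 : ℝ)/256))^3 ≤ ((1331 : ℝ)/1073741824) := by
    calc (s - ((469 : ℝ)/256))^3 ≤ ((11 : ℝ)/1024)^3 := by gcongr
      _ = ((1331 : ℝ)/1073741824) := by norm_num
  have hl3 : (0:ℝ) ≤ (s - ((469 : ℝ)/256))^3 := by positivity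
  have hu4 : (s - ((469 : ℝ)/256))^4 ≤ ((14641 : ℝ)/1099511627776) := by
    calc (s - ((469 : ℝ)/256))^4 ≤ ((11 : ℝ)/1024)^4 := by gcongr
      _ = ((14641 : ℝ)/1099511627776) := by norm_num
  have hl4 : (0:ℝ) ≤ (s - ((469 : ℝ)/256))^4 := by positivity
  have hu5 : (s - ((469 : ℝ)/256))^5 ≤ ((161051 : ℝ)/1125899906842624) := by
    calc (s - ((469 : ℝ)/256))^5 ≤ ((11 : ℝ)/1024)^5 := by gcongr
      _ = ((161051 : ℝ)/1125899906842624) := by norm_num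
  have hl5 : (0:ℝ) ≤ (s - ((469 : ℝ)/256))^5 := by positivity
  have hu6 : (s - ((469 : ℝ)/256))^6 ≤ ((1771561 : ℝ)/1152921504606846976) := by
    calc (s - ((469 : ℝ)/256))^6 ≤ ((11 : ℝ)/1024)^6 := by gcongr
      _ = ((1771561 : ℝ)/1152921504606846976) := by norm_num
  have hl6 : (0:ℝ) ≤ (s - ((469 : ℝ)/256))^6 := by positivity
  have hu7 : (s - ((469 : ℝ)/256))^7 ≤ ((19487171 : ℝ)/1180591620717411303424) := by
    calc (s - ((469 : ℝ)/256))^7 ≤ ((11 : ℝ)/1024)^7 := by gcongr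
      _ = ((19487171 : ℝ)/1180591620717411303424) := by norm_num
  have hl7 : (0:ℝ) ≤ (s - ((469 : ℝ)/256))^7 := by positivity
  have hu8 : (s - ((469 : ℝ)/256))^8 ≤ ((214358881 : ℝ)/1208925819614629174706176) := by
    calc (s - ((469 : ℝ)/256))^8 ≤ ((11 : ℝ)/1024)^8 := by gcongr
      _ = ((214358881 : ℝ)/1208925819614629174706176) := by norm_num
  have hl8 : (0:ℝ) ≤ (s - ((469 : ℝ)/256))^8 := by positivity
  have hu9 : (s - ((469 : ℝ)/256))^9 ≤ ((2357947691 : ℝ)/1237940039285380274899124224) := by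
    calc (s - ((469 : ℝ)/256))^9 ≤ ((11 : ℝ)/1024)^9 := by gcongr
      _ = ((2357947691 : ℝ)/1237940039285380274899124224) := by norm_num
  have hl9 : (0:ℝ) ≤ (s - ((469 : ℝ)/256))^9 := by positivity
  have hu10 : (s - ((469 : ℝ)/256))^10 ≤ ((25937424601 : ℝ)/1267650600228229401496703205376) := by
    calc (s - ((469 : ℝ)/256))^10 ≤ ((11 : ℝ)/1024)^10 := by gcongr
      _ = ((25937424601 : ℝ)/1267650600228229401496703205376) := by norm_num
  have hl10 : (0:ℝ) ≤ (s - ((469 : ℝ)/256))^10 := by positivity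
  have hu11 : (s - ((469 : ℝ)/256))^11 ≤ ((285311670611 : ℝ)/1298074214633706907132624082305024) := by
    calc (s - ((469 : ℝ)/256))^11 ≤ ((11 : ℝ)/1024)^11 := by gcongr
      _ = ((285311670611 : ℝ)/1298074214633706907132624082305024) := by norm_num
  have hl11 : (0:ℝ) ≤ (s - ((469 : ℝ)/256))^11 := by positivity
  have hu12 : (s - ((469 : ℝ)/256))^12 ≤ ((3138428376721 : ℝ)/1329227995784915872903807060280344576) := by
    calc (s - ((469 : ℝ)/256))^12 ≤ ((11 : ℝ)/1024)^12 := by gcongr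
      _ = ((3138428376721 : ℝ)/1329227995784915872903807060280344576) := by norm_num
  have hl12 : (0:ℝ) ≤ (s - ((469 : ℝ)/256))^12 := by positivity
  have hu13 : (s - ((469 : ℝ)/256))^13 ≤ ((34522712143931 : ℝ)/1361129467683753853853498429727072845824) := by
    calc (s - ((469 : ℝ)/256))^13 ≤ ((11 : ℝ)/1024)^13 := by gcongr
      _ = ((34522712143931 : ℝ)/1361129467683753853853498429727072845824) := by norm_num
  have hl13 : (0:ℝ) ≤ (s - ((469 : ℝ)/256))^13 := by positivity
  have hu14 : (s - ((469 : ℝ)/256))^14 ≤ ((379749833583241 : ℝ)/1393796574908163946345982392040522594123776) := by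
    calc (s - ((469 : ℝ)/256))^14 ≤ ((11 : ℝ)/1024)^14 := by gcongr
      _ = ((379749833583241 : ℝ)/1393796574908163946345982392040522594123776) := by norm_num
  have hl14 : (0:ℝ) ≤ (s - ((469 : ℝ)/256))^14 := by positivity
  have hu15 : (s - ((469 : ℝ)/256))^15 ≤ ((4177248169415651 : ℝ)/1427247692705959881058285969449495136382746624) := by
    calc (s - ((469 : ℝ)/256))^15 ≤ ((11 : ℝ)/1024)^15 := by gcongr
      _ = ((4177248169415651 : ℝ)/1427247692705959881058285969449495136382746624) := by norm_num
  have hl15 : (0:ℝ) ≤ (s - ((469 : ℝ)/256))^15 := by positivity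
  have hu16 : (s - ((469 : ℝ)/256))^16 ≤ ((45949729863572161 : ℝ)/1461501637330902918203684832716283019655932542976) := by
    calc (s - ((469 : ℝ)/256))^16 ≤ ((11 : ℝ)/1024)^16 := by gcongr
      _ = ((45949729863572161 : ℝ)/1461501637330902918203684832716283019655932542976) := by norm_num
  have hl16 : (0:ℝ) ≤ (s - ((469 : ℝ)/256))^16 := by positivity
  have hu17 : (s - ((469 : ℝ)/256))^17 ≤ ((505447028499293771 : ℝ)/1496577676626844588240573268701473812127674924007424) := by
    calc (s - ((469 : ℝ)/256))^17 ≤ ((11 : ℝ)/1024)^17 := by gcongr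
      _ = ((505447028499293771 : ℝ)/1496577676626844588240573268701473812127674924007424) := by norm_num
  have hl17 : (0:ℝ) ≤ (s - ((469 : ℝ)/256))^17 := by positivity
  have hid : Ppoly s = ((1983747474993764655487563499379766365391699438751957669 : ℝ)/3409391019565530327585555977760545028253359436254412800) + ((50022754935695055780016676124243069944796928323233 : ℝ)/13317933670177852842131078038127129016614685297868800) * (s - ((469 : ℝ)/256)) + ((-1334850616538741712710425614267569889238142037091 : ℝ)/6502897299891529708071815448304262215143889305600) * (s - ((469 : ℝ)/256))^2 + ((141066080951050247299528754322964828711272781 : ℝ)/25401942577701287922155529094938524277905817600) * (s - ((469 : ℝ)/256))^3 + ((548456182190414685474065915128369010922659 : ℝ)/39690535277658262378368014210841444184227840) * (s - ((469 : ℝ)/256))^4 + ((-271796324651808129708987180082513557589 : ℝ)/775205767141762937077500277555496956723200) * (s - ((469 : ℝ)/256))^5 + ((-598867464420743796547112047817104513 : ℝ)/1514073763948755736479492729600579993600) * (s - ((469 : ℝ)/256))^6 + ((2068552008813510802517682282031 : ℝ)/236574025616993083824920739000090624) * (s - ((469 : ℝ)/256))^7 + ((580121880148319694298879860647 : ℝ)/92411728756637923369109663671910400)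 * (s - ((469 : ℝ)/256))^8 + ((-8731141395856339113612209 : ℝ)/72196663091123377632116924743680) * (s - ((469 : ℝ)/256))^9 + ((-4465477602085027028809 : ℝ)/70504553799925173468864184320) * (s - ((469 : ℝ)/256))^10 + ((1500930094439475443 : ℝ)/1377042066404788544313753600) * (s - ((469 : ℝ)/256))^11 + ((4815394818595751 : ℝ)/10758141143787410502451200) * (s - ((469 : ℝ)/256))^12 + ((-1560447044411 : ℝ)/294167921900437005926400) * (s - ((469 : ℝ)/256))^13 + ((-223682917 : ℝ)/114909344492358205440) * (s - ((469 : ℝ)/256))^14 + ((1380041 : ℝ)/15710261942314598400) * (s - ((469 : ℝ)/256))^15 + ((1139 : ℝ)/70135097956761600) * (s - ((469 : ℝ)/256))^16 + ((1 : ℝ)/1917756584755200) * (s - ((469 : ℝ)/256))^17 := by unfold Ppoly; ring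
  rw [hid, abs_le]
  constructor <;> linarith [hx0, hx1, hu2, hl2, hu3, hl3, hu4, hl4, hu5, hl5, hu6, hl6, hu7, hl7, hu8, hl8, hu9, hl9, hu10, hl10, hu11, hl11, hu12, hl12, hu13, hl13, hu14, hl14, hu15, hl15, hu16, hl16, hu17, hl17]

lemma ival10 (s : ℝ) (h1 : ((1887 : ℝ)/1024) ≤ s) (h2 : s ≤ ((989 : ℝ)/512)) : |Ppoly s| ≤ ((581889 : ℝ)/1000000) := by
  have hx0 : (0:ℝ) ≤ s - ((1887 : ℝ)/1024) := by linarith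
  have hx1 : s - ((1887 : ℝ)/1024) ≤ ((91 : ℝ)/1024) := by linarith
  have hu2 : (s - ((1887 : ℝ)/1024))^2 ≤ ((8281 : ℝ)/1048576) := by
    calc (s - ((1887 : ℝ)/1024))^2 ≤ ((91 : ℝ)/1024)^2 := by gcongr
      _ = ((8281 : ℝ)/1048576) := by norm_num
  have hl2 : (0:ℝ) ≤ (s - ((1887 : ℝ)/1024))^2 := by positivity
  have hu3 : (s - ((1887 : ℝ)/1024))^3 ≤ ((753571 : ℝ)/1073741824) := by
    calc (s - ((1887 : ℝ)/1024))^3 ≤ ((91 : ℝ)/1024)^3 := by gcongr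
      _ = ((753571 : ℝ)/1073741824) := by norm_num
  have hl3 : (0:ℝ) ≤ (s - ((1887 : ℝ)/1024))^3 := by positivity
  have hu4 : (s - ((1887 : ℝ)/1024))^4 ≤ ((68574961 : ℝ)/1099511627776) := by
    calc (s - ((1887 : ℝ)/1024))^4 ≤ ((91 : ℝ)/1024)^4 := by gcongr
      _ = ((68574961 : ℝ)/1099511627776) := by norm_num
  have hl4 : (0:ℝ) ≤ (s - ((1887 : ℝ)/1024))^4 := by positivity
  have hu5 : (s - ((1887 : ℝ)/1024))^5 ≤ ((6240321451 : ℝ)/1125899906842624) := by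
    calc (s - ((1887 : ℝ)/1024))^5 ≤ ((91 : ℝ)/1024)^5 := by gcongr
      _ = ((6240321451 : ℝ)/1125899906842624) := by norm_num
  have hl5 : (0:ℝ) ≤ (s - ((1887 : ℝ)/1024))^5 := by positivity
  have hu6 : (s - ((1887 : ℝ)/1024))^6 ≤ ((567869252041 : ℝ)/1152921504606846976) := by
    calc (s - ((1887 : ℝ)/1024))^6 ≤ ((91 : ℝ)/1024)^6 := by gcongr
      _ = ((567869252041 : ℝ)/1152921504606846976) := by norm_num
  have hl6 : (0:ℝ) ≤ (s - ((1887 : ℝ)/1024))^6 := by positivity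
  have hu7 : (s - ((1887 : ℝ)/1024))^7 ≤ ((51676101935731 : ℝ)/1180591620717411303424) := by
    calc (s - ((1887 : ℝ)/1024))^7 ≤ ((91 : ℝ)/1024)^7 := by gcongr
      _ = ((51676101935731 : ℝ)/1180591620717411303424) := by norm_num
  have hl7 : (0:ℝ) ≤ (s - ((1887 : ℝ)/1024))^7 := by positivity
  have hu8 : (s - ((1887 : ℝ)/1024))^8 ≤ ((4702525276151521 : ℝ)/1208925819614629174706176) := by
    calc (s - ((1887 : ℝ)/1024))^8 ≤ ((91 : ℝ)/1024)^8 := by gcongr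
      _ = ((4702525276151521 : ℝ)/1208925819614629174706176) := by norm_num
  have hl8 : (0:ℝ) ≤ (s - ((1887 : ℝ)/1024))^8 := by positivity
  have hu9 : (s - ((1887 : ℝ)/1024))^9 ≤ ((427929800129788411 : ℝ)/1237940039285380274899124224) := by
    calc (s - ((1887 : ℝ)/1024))^9 ≤ ((91 : ℝ)/1024)^9 := by gcongr
      _ = ((427929800129788411 : ℝ)/1237940039285380274899124224) := by norm_num
  have hl9 : (0:ℝ) ≤ (s - ((1887 : ℝ)/1024))^9 := by positivity
  have hu10 : (s - ((1887 : ℝ)/1024))^10 ≤ ((38941611811810745401 : ℝ)/1267650600228229401496703205376) := by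
    calc (s - ((1887 : ℝ)/1024))^10 ≤ ((91 : ℝ)/1024)^10 := by gcongr
      _ = ((38941611811810745401 : ℝ)/1267650600228229401496703205376) := by norm_num
  have hl10 : (0:ℝ) ≤ (s - ((1887 : ℝ)/1024))^10 := by positivity
  have hu11 : (s - ((1887 : ℝ)/1024))^11 ≤ ((3543686674874777831491 : ℝ)/1298074214633706907132624082305024) := by
    calc (s - ((1887 : ℝ)/1024))^11 ≤ ((91 : ℝ)/1024)^11 := by gcongr
      _ = ((3543686674874777831491 : ℝ)/1298074214633706907132624082305024) := by norm_num
  have hl11 : (0:ℝ) ≤ (s - ((1887 : ℝ)/1024))^11 := by positivity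
  have hu12 : (s - ((1887 : ℝ)/1024))^12 ≤ ((322475487413604782665681 : ℝ)/1329227995784915872903807060280344576) := by
    calc (s - ((1887 : ℝ)/1024))^12 ≤ ((91 : ℝ)/1024)^12 := by gcongr
      _ = ((322475487413604782665681 : ℝ)/1329227995784915872903807060280344576) := by norm_num
  have hl12 : (0:ℝ) ≤ (s - ((1887 : ℝ)/1024))^12 := by positivity
  have hu13 : (s - ((1887 : ℝ)/1024))^13 ≤ ((29345269354638035222576971 : ℝ)/1361129467683753853853498429727072845824) := by
    calc (s - ((1887 : ℝ)/1024))^13 ≤ ((91 : ℝ)/1024)^13 := by gcongr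
      _ = ((29345269354638035222576971 : ℝ)/1361129467683753853853498429727072845824) := by norm_num
  have hl13 : (0:ℝ) ≤ (s - ((1887 : ℝ)/1024))^13 := by positivity
  have hu14 : (s - ((1887 : ℝ)/1024))^14 ≤ ((2670419511272061205254504361 : ℝ)/1393796574908163946345982392040522594123776) := by
    calc (s - ((1887 : ℝ)/1024))^14 ≤ ((91 : ℝ)/1024)^14 := by gcongr
      _ = ((2670419511272061205254504361 : ℝ)/1393796574908163946345982392040522594123776) := by norm_num
  have hl14 : (0:ℝ) ≤ (s - ((1887 : ℝ)/1024))^14 := by positivity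
  have hu15 : (s - ((1887 : ℝ)/1024))^15 ≤ ((243008175525757569678159896851 : ℝ)/1427247692705959881058285969449495136382746624) := by
    calc (s - ((1887 : ℝ)/1024))^15 ≤ ((91 : ℝ)/1024)^15 := by gcongr
      _ = ((243008175525757569678159896851 : ℝ)/1427247692705959881058285969449495136382746624) := by norm_num
  have hl15 : (0:ℝ) ≤ (s - ((1887 : ℝ)/1024))^15 := by positivity
  have hu16 : (s - ((1887 : ℝ)/1024))^16 ≤ ((22113743972843938840712550613441 : ℝ)/1461501637330902918203684832716283019655932542976) := by
    calc (s - ((1887 : ℝ)/1024))^16 ≤ ((91 : ℝ)/1024)^16 := by gcongr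
      _ = ((22113743972843938840712550613441 : ℝ)/1461501637330902918203684832716283019655932542976) := by norm_num
  have hl16 : (0:ℝ) ≤ (s - ((1887 : ℝ)/1024))^16 := by positivity
  have hu17 : (s - ((1887 : ℝ)/1024))^17 ≤ ((2012350701528798434504842105823131 : ℝ)/1496577676626844588240573268701473812127674924007424) := by
    calc (s - ((1887 : ℝ)/1024))^17 ≤ ((91 : ℝ)/1024)^17 := by gcongr
      _ = ((2012350701528798434504842105823131 : ℝ)/1496577676626844588240573268701473812127674924007424) := by norm_num
  have hl17 : (0:ℝ) ≤ (s - ((1887 : ℝ)/1024))^17 := by positivity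
  have hid : Ppoly s = ((2290800305034061673447328152268666610856803690435215396106325751 : ℝ)/3936998208434526175077807126235848376179397334767842446488371200) + ((-2507009936952391970266424965645731742240231549265370460679 : ℝ)/3844724812924341967849421021714695679862692709734221139148800) * (s - ((1887 : ℝ)/1024)) + ((-96250286473555230112650842068943739672831101602712985177 : ℝ)/469326759390178462872243777064782187483238856168728166400) * (s - ((1887 : ℝ)/1024))^2 + ((2817197664322450824265269203263553148696434277744029 : ℝ)/458326913466971155148675563539826354964100445477273600) * (s - ((1887 : ℝ)/1024))^3 + ((352921841618872357962011026552722292536210683111 : ℝ)/25576278653290801068564484572534952843978819502080) * (s - ((1887 : ℝ)/1024))^4 + ((-140900674059519278205825467615824460613680273 : ℝ)/374652519335314468777800066980492473300470988800) * (s - ((1887 : ℝ)/1024))^5 + ((-14446663859739239604933696051706582862339 : ℝ)/36587160091339303591582037791063718095749120) * (s - ((1887 : ℝ)/1024))^6 + ((1393011588961754096031370096129973479 : ℝ)/150064523812133862387348201877409781252096) * (s - ((1887 : ℝ)/1024))^7 + ((10202234696346776797486156517767341 : ℝ)/1628304294836521944307163648843422105600) * (s - ((1887 : ℝ)/1024))^8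 + ((-365601839017573700018494921777 : ℝ)/2862253643267323730227436101482577920) * (s - ((1887 : ℝ)/1024))^9 + ((-44166345015670619184130787 : ℝ)/698792393375811457575057641963520) * (s - ((1887 : ℝ)/1024))^10 + ((1678179756911007135911 : ℝ)/1462316671405855449724590489600) * (s - ((1887 : ℝ)/1024))^11 + ((1276224176401152953 : ℝ)/2856087248839561425243340800) * (s - ((1887 : ℝ)/1024))^12 + ((-46826625408659 : ℝ)/8367443111834652613017600) * (s - ((1887 : ℝ)/1024))^13 + ((-736812487 : ℝ)/381328787648714637312) * (s - ((1887 : ℝ)/1024))^14 + ((2531593 : ℝ)/27929354564114841600) * (s - ((1887 : ℝ)/1024))^15 + ((10693 : ℝ)/654594247596441600) * (s - ((1887 : ℝ)/1024))^16 + ((1 : ℝ)/1917756584755200) * (s - ((1887 : ℝ)/1024))^17 := by unfold Ppoly; ring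
  rw [hid, abs_le]
  constructor <;> linarith [hx0, hx1, hu2, hl2, hu3, hl3, hu4, hl4, hu5, hl5, hu6, hl6, hu7, hl7, hu8, hl8, hu9, hl9, hu10, hl10, hu11, hl11, hu12, hl12, hu13, hl13, hu14, hl14, hu15, hl15, hu16, hl16, hu17, hl17]

lemma ival11 (s : ℝ) (h1 : ((989 : ℝ)/512) ≤ s) (h2 : s ≤ ((11 : ℝ)/5)) : |Ppoly s| ≤ ((581889 : ℝ)/1000000) := by
  have hx0 : (0:ℝ) ≤ s - ((989 : ℝ)/512) := by linarith
  have hx1 : s - ((989 : ℝ)/512) ≤ ((687 : ℝ)/2560) := by linarith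
  have hu2 : (s - ((989 : ℝ)/512))^2 ≤ ((471969 : ℝ)/6553600) := by
    calc (s - ((989 : ℝ)/512))^2 ≤ ((687 : ℝ)/2560)^2 := by gcongr
      _ = ((471969 : ℝ)/6553600) := by norm_num
  have hl2 : (0:ℝ) ≤ (s - ((989 : ℝ)/512))^2 := by positivity
  have hu3 : (s - ((989 : ℝ)/512))^3 ≤ ((324242703 : ℝ)/16777216000) := by
    calc (s - ((989 : ℝ)/512))^3 ≤ ((687 : ℝ)/2560)^3 := by gcongr
      _ = ((324242703 : ℝ)/16777216000) := by norm_num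
  have hl3 : (0:ℝ) ≤ (s - ((989 : ℝ)/512))^3 := by positivity
  have hu4 : (s - ((989 : ℝ)/512))^4 ≤ ((222754736961 : ℝ)/42949672960000) := by
    calc (s - ((989 : ℝ)/512))^4 ≤ ((687 : ℝ)/2560)^4 := by gcongr
      _ = ((222754736961 : ℝ)/42949672960000) := by norm_num
  have hl4 : (0:ℝ) ≤ (s - ((989 : ℝ)/512))^4 := by positivity
  have hu5 : (s - ((989 : ℝ)/512))^5 ≤ ((153032504292207 : ℝ)/109951162777600000) := by
    calc (s - ((989 : ℝ)/512))^5 ≤ ((687 : ℝ)/2560)^5 := by gcongr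
      _ = ((153032504292207 : ℝ)/109951162777600000) := by norm_num
  have hl5 : (0:ℝ) ≤ (s - ((989 : ℝ)/512))^5 := by positivity
  have hu6 : (s - ((989 : ℝ)/512))^6 ≤ ((105133330448746209 : ℝ)/281474976710656000000) := by
    calc (s - ((989 : ℝ)/512))^6 ≤ ((687 : ℝ)/2560)^6 := by gcongr
      _ = ((105133330448746209 : ℝ)/281474976710656000000) := by norm_num
  have hl6 : (0:ℝ) ≤ (s - ((989 : ℝ)/512))^6 := by positivity
  have hu7 : (s - ((989 : ℝ)/512))^7 ≤ ((72226598018288645583 : ℝ)/720575940379279360000000) := by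
    calc (s - ((989 : ℝ)/512))^7 ≤ ((687 : ℝ)/2560)^7 := by gcongr
      _ = ((72226598018288645583 : ℝ)/720575940379279360000000) := by norm_num
  have hl7 : (0:ℝ) ≤ (s - ((989 : ℝ)/512))^7 := by positivity
  have hu8 : (s - ((989 : ℝ)/512))^8 ≤ ((49619672838564299515521 : ℝ)/1844674407370955161600000000) := by
    calc (s - ((989 : ℝ)/512))^8 ≤ ((687 : ℝ)/2560)^8 := by gcongr
      _ = ((49619672838564299515521 : ℝ)/1844674407370955161600000000) := by norm_num
  have hl8 : (0:ℝ) ≤ (s - ((989 : ℝ)/512))^8 := by positivity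
  have hu9 : (s - ((989 : ℝ)/512))^9 ≤ ((34088715240093673767162927 : ℝ)/4722366482869645213696000000000) := by
    calc (s - ((989 : ℝ)/512))^9 ≤ ((687 : ℝ)/2560)^9 := by gcongr
      _ = ((34088715240093673767162927 : ℝ)/4722366482869645213696000000000) := by norm_num
  have hl9 : (0:ℝ) ≤ (s - ((989 : ℝ)/512))^9 := by positivity
  have hu10 : (s - ((989 : ℝ)/512))^10 ≤ ((23418947369944353878040930849 : ℝ)/12089258196146291747061760000000000) := by
    calc (s - ((989 : ℝ)/512))^10 ≤ ((687 : ℝ)/2560)^10 := by gcongr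
      _ = ((23418947369944353878040930849 : ℝ)/12089258196146291747061760000000000) := by norm_num
  have hl10 : (0:ℝ) ≤ (s - ((989 : ℝ)/512))^10 := by positivity
  have hu11 : (s - ((989 : ℝ)/512))^11 ≤ ((16088816843151771114214119493263 : ℝ)/30948500982134506872478105600000000000) := by
    calc (s - ((989 : ℝ)/512))^11 ≤ ((687 : ℝ)/2560)^11 := by gcongr
      _ = ((16088816843151771114214119493263 : ℝ)/30948500982134506872478105600000000000) := by norm_num
  have hl11 : (0:ℝ) ≤ (s - ((989 : ℝ)/512))^11 := by positivity
  have hu12 : (s - ((989 : ℝ)/512))^12 ≤ ((11053017171245266755465100091871681 : ℝ)/79228162514264337593543950336000000000000) := by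
    calc (s - ((989 : ℝ)/512))^12 ≤ ((687 : ℝ)/2560)^12 := by gcongr
      _ = ((11053017171245266755465100091871681 : ℝ)/79228162514264337593543950336000000000000) := by norm_num
  have hl12 : (0:ℝ) ≤ (s - ((989 : ℝ)/512))^12 := by positivity
  have hu13 : (s - ((989 : ℝ)/512))^13 ≤ ((7593422796645498261004523763115844847 : ℝ)/202824096036516704239472512860160000000000000) := by
    calc (s - ((989 : ℝ)/512))^13 ≤ ((687 : ℝ)/2560)^13 := by gcongr
      _ = ((7593422796645498261004523763115844847 : ℝ)/202824096036516704239472512860160000000000000) := by norm_num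
  have hl13 : (0:ℝ) ≤ (s - ((989 : ℝ)/512))^13 := by positivity
  have hu14 : (s - ((989 : ℝ)/512))^14 ≤ ((5216681461295457305310107825260585409889 : ℝ)/519229685853482762853049632922009600000000000000) := by
    calc (s - ((989 : ℝ)/512))^14 ≤ ((687 : ℝ)/2560)^14 := by gcongr
      _ = ((5216681461295457305310107825260585409889 : ℝ)/519229685853482762853049632922009600000000000000) := by norm_num
  have hl14 : (0:ℝ) ≤ (s - ((989 : ℝ)/512))^14 := by positivity
  have hu15 : (s - ((989 : ℝ)/512))^15 ≤ ((3583860163909979168748044075954022176593743 : ℝ)/1329227995784915872903807060280344576000000000000000) := by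
    calc (s - ((989 : ℝ)/512))^15 ≤ ((687 : ℝ)/2560)^15 := by gcongr
      _ = ((3583860163909979168748044075954022176593743 : ℝ)/1329227995784915872903807060280344576000000000000000) := by norm_num
  have hl15 : (0:ℝ) ≤ (s - ((989 : ℝ)/512))^15 := by positivity
  have hu16 : (s - ((989 : ℝ)/512))^16 ≤ ((2462111932606155688929906280180413235319901441 : ℝ)/3402823669209384634633746074317682114560000000000000000) := by
    calc (s - ((989 : ℝ)/512))^16 ≤ ((687 : ℝ)/2560)^16 := by gcongr
      _ = ((2462111932606155688929906280180413235319901441 : ℝ)/3402823669209384634633746074317682114560000000000000000) := by norm_num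
  have hl16 : (0:ℝ) ≤ (s - ((989 : ℝ)/512))^16 := by positivity
  have hu17 : (s - ((989 : ℝ)/512))^17 ≤ ((1691470897700428958294845614483943892664772289967 : ℝ)/8711228593176024664662389950253266213273600000000000000000) := by
    calc (s - ((989 : ℝ)/512))^17 ≤ ((687 : ℝ)/2560)^17 := by gcongr
      _ = ((1691470897700428958294845614483943892664772289967 : ℝ)/8711228593176024664662389950253266213273600000000000000000) := by norm_num
  have hl17 : (0:ℝ) ≤ (s - ((989 : ℝ)/512))^17 := by positivity
  have hid : Ppoly s = ((12704418692338297837840004153592716279014909191191421223302173 : ℝ)/21896909286108166363767405662734477739217992073408181331558400) + ((-1578881831333645799376603475611935316425506786297163112111 : ℝ)/42767400949430012429233214185028276834410140768375354163200) * (s - ((989 : ℝ)/512)) + ((-2117404522154315303063507029694305018929123801771088379 : ℝ)/10441259997419436628230765181891669149025913273529139200) * (s - ((989 : ℝ)/512))^2 + ((224660817237690310628143896365626894465100978269549 : ℝ)/20393085932459837164513213245882166306691236862361600) * (s - ((989 : ℝ)/512))^3 + ((30920034461398933284540207499824270434821822813 : ℝ)/2276014054962035397825135406906491775300361256960) * (s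 - ((989 : ℝ)/512))^4 + ((-12999006998962582831186719173005867197203059 : ℝ)/22226699755488626931886087958071208743167590400) * (s - ((989 : ℝ)/512))^5 + ((-1683084123902001833966101854543310561411 : ℝ)/4341152295993872447634001554310782957649920) * (s - ((989 : ℝ)/512))^6 + ((812854568551158968261962017807835499 : ℝ)/59351691546791224869996115000342735749120) * (s - ((989 : ℝ)/512))^7 + ((14237641231014271151151892378146703 : ℝ)/2318425451046532221484223242200888115200) * (s - ((989 : ℝ)/512))^8 + ((-166032242087829691852658457377 : ℝ)/905634941815051649017274703984721920) * (s - ((989 : ℝ)/512))^9 + ((-27350489046621557546915537 : ℝ)/442204561433130687996716164055040) * (s - ((989 : ℝ)/512))^10 + ((999526156192867659413 : ℝ)/616914845749345267852561612800) * (s - ((989 : ℝ)/512))^11 + ((1057961999953208857 : ℝ)/2409823616208379952549068800) * (s - ((989 : ℝ)/512))^12 + ((-37270302433691 : ℝ)/4706686750406992094822400) * (s - ((989 : ℝ)/512))^13 + ((-2310995311 : ℝ)/1286984658314411900928) * (s - ((989 : ℝ)/512))^14 + ((7190873 : ℝ)/62841047769258393600) * (s - ((989 : ℝ)/512))^15 +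 ((16813 : ℝ)/981891371394662400) * (s - ((989 : ℝ)/512))^16 + ((1 : ℝ)/1917756584755200) * (s - ((989 : ℝ)/512))^17 := by unfold Ppoly; ring
  rw [hid, abs_le]
  constructor <;> linarith [hx0, hx1, hu2, hl2, hu3, hl3, hu4, hl4, hu5, hl5, hu6, hl6, hu7, hl7, hu8, hl8, hu9, hl9, hu10, hl10, hu11, hl11, hu12, hl12, hu13, hl13, hu14, hl14, hu15, hl15, hu16, hl16, hu17, hl17]

lemma Pabs (s : ℝ) (h1 : (0:ℝ) ≤ s) (h2 : s ≤ ((11:ℝ)/5)) : |Ppoly s| ≤ ((581889 : ℝ)/1000000) := by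
  by_cases hc0 : s ≤ ((563 : ℝ)/512)
  · exact ival0 s (by linarith) hc0
  push_neg at hc0
  by_cases hc1 : s ≤ ((1407 : ℝ)/1024)
  · exact ival1 s (by linarith) hc1
  push_neg at hc1
  by_cases hc2 : s ≤ ((809 : ℝ)/512)
  · exact ival2 s (by linarith) hc2
  push_neg at hc2
  by_cases hc3 : s ≤ ((1697 : ℝ)/1024)
  · exact ival3 s (by linarith) hc3
  push_neg at hc3
  by_cases hc4 : s ≤ ((883 : ℝ)/512)
  · exact ival4 s (by linarith) hc4
  push_neg at hc4
  by_cases hc5 : s ≤ ((913 : ℝ)/512)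
  · exact ival5 s (by linarith) hc5
  push_neg at hc5
  by_cases hc6 : s ≤ ((463 : ℝ)/256)
  · exact ival6 s (by linarith) hc6
  push_neg at hc6
  by_cases hc7 : s ≤ ((233 : ℝ)/128)
  · exact ival7 s (by linarith) hc7
  push_neg at hc7
  by_cases hc8 : s ≤ ((469 : ℝ)/256)
  · exact ival8 s (by linarith) hc8
  push_neg at hc8
  by_cases hc9 : s ≤ ((1887 : ℝ)/1024)
  · exact ival9 s (by linarith) hc9
  push_neg at hc9
  by_cases hc10 : s ≤ ((989 : ℝ)/512)
  · exact ival10 s (by linarith) hc10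
  push_neg at hc10
  exact ival11 s (by linarith) h2


lemma sum9 (s : ℝ) : (∑ k ∈ Finset.range 9,
    (-1:ℝ)^k * (∏ i ∈ Finset.range (k+1), (2*(i:ℝ)+1)/(2*(i:ℝ)+2)) * s^(2*k+1)
      / ((2*k+1).factorial : ℝ)) = Ppoly s := by
  simp only [Finset.sum_range_succ, Finset.prod_range_succ, Finset.prod_range_zero,
    Finset.sum_range_zero, Ppoly]
  norm_num [Nat.factorial]
  ring

lemma abs_le_of_series {X P E B : ℝ} (h : |X - π*P| ≤ π*E) (hPB : |P| + E ≤ B) :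
    |X| ≤ π * B := by
  have hπ := Real.pi_pos
  calc |X| = |(X - π*P) + π*P| := by ring_nf
    _ ≤ |X - π*P| + |π*P| := abs_add_le _ _
    _ ≤ π*E + π*|P| := by
        rw [abs_mul, abs_of_pos hπ]
        exact add_le_add h le_rfl
    _ = π * (|P| + E) := by ring
    _ ≤ π * B := by nlinarith
lemma Aint_neg (s : ℝ) : Aint (-s) = -Aint s := by
  unfold Aint
  rw [← intervalIntegral.integral_neg]
  apply intervalIntegral.integral_congr
  intro τ _
  show Real.sin τ * Real.sin (-s * Real.sin τ) = -(Real.sin τ * Real.sin (s * Real.sin τ))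
  rw [neg_mul, Real.sin_neg]
  ring

lemma J1_sq_le (s : ℝ) : J1 s ^ 2 ≤ 3386/10000 := by
  set x := |s| with hx
  have hx0 : 0 ≤ x := abs_nonneg s
  have hsq : π^2 * J1 s ^ 2 = Aint x ^ 2 := by
    rcases abs_cases s with ⟨h1, _⟩ | ⟨h1, _⟩
    · rw [hx, h1, ← L2]; ring
    · rw [hx, h1, Aint_neg, ← L2]; ring
  have hπ := Real.pi_pos
  have key : Aint x ^ 2 ≤ π^2 * (3386/10000) := by
    by_cases hcase : x ≤ 11/5
    · have hA := Aint_series 9 x hx0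
      rw [sum9] at hA
      have hE : x^(2*9+1)/((2*9+1).factorial : ℝ) ≤ 1/1000000 := by
        have hp : x^(2*9+1) ≤ (11/5:ℝ)^(2*9+1) := pow_le_pow_left₀ hx0 hcase _
        have : ((2*9+1).factorial : ℝ) = 121645100408832000 := by norm_num [Nat.factorial]
        rw [this]
        rw [div_le_iff₀ (by norm_num)]
        calc x^(2*9+1) ≤ (11/5:ℝ)^(2*9+1) := hp
          _ ≤ 1/1000000 * 121645100408832000 := by norm_num
      have hB := Pabs x hx0 hcase
      have hXb : |Aint x| ≤ π * (58189/100000) := by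
        apply abs_le_of_series hA
        have := hE
        linarith
      have : Aint x ^2 ≤ (π * (58189/100000))^2 := by
        rw [← sq_abs (Aint x)]
        apply pow_le_pow_left₀ (abs_nonneg _) hXb
      calc Aint x ^2 ≤ (π * (58189/100000))^2 := this
        _ ≤ π^2 * (3386/10000) := by nlinarith [sq_nonneg π]
    · push_neg at hcase
      have h := tail_bound x (le_of_lt hcase)
      have hA := Aint_series 9 (11/5) (by norm_num)
      have hC := Cint_series 9 (11/5) (by norm_num)
      norm_num [Finset.sum_range_succ, Finset.prod_range_succ, Nat.factorial] at hA hC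
      have hA' : |Aint (11/5)| ≤ π * (5562/10000) := by
        apply abs_le_of_series hA
        rw [abs_of_nonneg (by norm_num)]
        norm_num
      have hC' : |Cint (11/5)| ≤ π * (1105/10000) := by
        apply abs_le_of_series hC
        rw [abs_of_nonneg (by norm_num)]
        norm_num
      have h1 : Aint (11/5) ^2 ≤ (π * (5562/10000))^2 := by
        rw [← sq_abs]; apply pow_le_pow_left₀ (abs_nonneg _) hA'
      have h2 : Cint (11/5) ^2 ≤ (π * (1105/10000))^2 := by
        rw [← sq_abs]; apply pow_le_pow_left₀ (abs_nonneg _) hC'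
      calc Aint x ^2 ≤ (Cint (11/5))^2 + (Aint (11/5))^2 := h
        _ ≤ (π * (1105/10000))^2 + (π * (5562/10000))^2 := add_le_add h2 h1
        _ ≤ π^2 * (3386/10000) := by nlinarith [sq_nonneg π]
  nlinarith [pow_pos hπ 2]

end P2

/-- Property (P2) of the paper: for `|t| ≤ 1`, `2 t² J₁(s)² ≤ 0.6772 < 1`. -/
theorem stmt_9 (t s : ℝ) (ht : |t| ≤ 1) :
    2 * t ^ 2 * J1 s ^ 2 ≤ 0.6772 ∧ (0.6772 : ℝ) < 1 := by
  constructor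
  · have hJ := P2.J1_sq_le s
    have ht2 : t^2 ≤ 1 := by
      rw [← sq_abs]
      exact pow_le_one₀ (abs_nonneg t) ht
    have hJ0 : 0 ≤ J1 s ^ 2 := sq_nonneg _
    have ht0 : 0 ≤ t^2 := sq_nonneg _
    norm_num
    nlinarith
  · norm_num
end
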